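/- arXiv:1808.02806 — 4 statements merged into one kernel-verified Lean document; each statement's English description precedes it below -/
import Mathlib

section
/- (Hölder inequality, Banach algebra version) Let X be a Banach algebra, 1 < p < ∞, 1/p + 1/q = 1, and ν : 𝒜 → Y a σ-additive vector measure. If f ∈ L^p_w(ν, X, Y) and g ∈ L^q_w(ν, X, Y), then sup_{‖y'‖≤1} ∫_Ω ‖f(w)·g(w)‖_X d|y'∘ν|(w) ≤ ‖f‖_{L^p_w(ν,X,Y)} · ‖g‖_{L^q_w(ν,X,Y)}, where f(w)·g(w) denotes multiplication in the algebra X. -/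
open MeasureTheory ENNReal

variable {Ω X Y : Type*}

/-- The total variation measure of the scalar measure `y' ∘ ν`. -/
noncomputable def scalarVar [MeasurableSpace Ω] [NormedAddCommGroup Y] [NormedSpace ℝ Y]
    (ν : VectorMeasure Ω Y) (y' : Y →L[ℝ] ℝ) : Measure Ω :=
  SignedMeasure.totalVariation (VectorMeasure.mapRange ν (y' : Y →ₗ[ℝ] ℝ).toAddMonoidHom y'.continuous)

/-- The `L^p_w(ν, X, Y)` norm. -/
noncomputable def lpwNorm [MeasurableSpace Ω] [NormedAddCommGroup X] [NormedAddCommGroup Y]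
    [NormedSpace ℝ Y] (ν : VectorMeasure Ω Y) (p : ℝ) (f : Ω → X) : ℝ≥0∞ :=
  ⨆ y' ∈ {y' : Y →L[ℝ] ℝ | ‖y'‖ ≤ 1},
    (∫⁻ ω, (‖f ω‖₊ : ℝ≥0∞) ^ p ∂ scalarVar ν y') ^ (1 / p)

/-- Membership in `L^p_w(ν, X, Y)`. -/
def MemLpw [MeasurableSpace Ω] [NormedAddCommGroup X] [NormedAddCommGroup Y]
    [NormedSpace ℝ Y] (ν : VectorMeasure Ω Y) (p : ℝ) (f : Ω → X) : Prop :=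
  StronglyMeasurable f ∧
    ∀ y' : Y →L[ℝ] ℝ, (∫⁻ ω, (‖f ω‖₊ : ℝ≥0∞) ^ p ∂ scalarVar ν y') < ∞

/-- The semivariation of the vector measure `ν`. -/
noncomputable def semivar [MeasurableSpace Ω] [NormedAddCommGroup Y] [NormedSpace ℝ Y]
    (ν : VectorMeasure Ω Y) (E : Set Ω) : ℝ≥0∞ :=
  ⨆ y' ∈ {y' : Y →L[ℝ] ℝ | ‖y'‖ ≤ 1}, scalarVar ν y' E

/-- The integral `∫_E h ds` of a real function with respect to a signed measure. -/
noncomputable def signedIntegral [MeasurableSpace Ω] (s : SignedMeasure Ω) (E : Set Ω)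
    (h : Ω → ℝ) : ℝ :=
  (∫ ω in E, h ω ∂ s.toJordanDecomposition.posPart) -
    (∫ ω in E, h ω ∂ s.toJordanDecomposition.negPart)

/-- The scalar signed measure `y' ∘ ν`. -/
noncomputable def scalarSigned [MeasurableSpace Ω] [NormedAddCommGroup Y] [NormedSpace ℝ Y]
    (ν : VectorMeasure Ω Y) (y' : Y →L[ℝ] ℝ) : SignedMeasure Ω :=
  VectorMeasure.mapRange ν (y' : Y →ₗ[ℝ] ℝ).toAddMonoidHom y'.continuous

/-- `ν`-integrability in the sense of Lewis. -/
def NuIntegrable [MeasurableSpace Ω] [NormedAddCommGroup Y] [NormedSpace ℝ Y]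
    (ν : VectorMeasure Ω Y) (h : Ω → ℝ) : Prop :=
  (∀ y' : Y →L[ℝ] ℝ, Integrable h (scalarVar ν y')) ∧
    ∀ E : Set Ω, MeasurableSet E → ∃ I : Y, ∀ y' : Y →L[ℝ] ℝ,
      y' I = signedIntegral (scalarSigned ν y') E h

variable [MeasurableSpace Ω] [NormedRing X] [CompleteSpace X]
  [NormedAddCommGroup Y] [NormedSpace ℝ Y] [CompleteSpace Y]

theorem lpw_holder_algebra (ν : VectorMeasure Ω Y) (p q : ℝ) (hp : 1 < p)
    (hpq : 1 / p + 1 / q = 1) (f g : Ω → X) (hf : MemLpw ν p f) (hg : MemLpw ν q g) :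
    (⨆ y' ∈ {y' : Y →L[ℝ] ℝ | ‖y'‖ ≤ 1},
        ∫⁻ ω, (‖f ω * g ω‖₊ : ℝ≥0∞) ∂ scalarVar ν y')
      ≤ lpwNorm ν p f * lpwNorm ν q g := by
  have hpq' : p.HolderConjugate q := by
    have h1 : 0 < 1 / q := by
      have : 1 / p < 1 := by rw [div_lt_one (by linarith)]; exact hp
      linarith
    exact ⟨by rw [inv_one, ← one_div, ← one_div]; exact hpq, by linarith, by simpa using h1⟩
  apply iSup₂_le
  intro y' hy'
  calc (∫⁻ ω, (‖f ω * g ω‖₊ : ℝ≥0∞) ∂ scalarVar ν y')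
      ≤ ∫⁻ ω, (‖f ω‖₊ : ℝ≥0∞) * (‖g ω‖₊ : ℝ≥0∞) ∂ scalarVar ν y' := by
        refine lintegral_mono fun ω => ?_
        rw [← ENNReal.coe_mul]
        exact ENNReal.coe_le_coe.mpr (nnnorm_mul_le _ _)
    _ ≤ (∫⁻ ω, (‖f ω‖₊ : ℝ≥0∞) ^ p ∂ scalarVar ν y') ^ (1 / p) *
        (∫⁻ ω, (‖g ω‖₊ : ℝ≥0∞) ^ q ∂ scalarVar ν y') ^ (1 / q) :=
        ENNReal.lintegral_mul_le_Lp_mul_Lq _ hpq' hf.1.nnnorm.measurable.coe_nnreal_ennreal.aemeasurable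
          hg.1.nnnorm.measurable.coe_nnreal_ennreal.aemeasurable
    _ ≤ lpwNorm ν p f * lpwNorm ν q g := by
        exact mul_le_mul' (le_iSup₂ (f := fun y' (_ : y' ∈ {y' : Y →L[ℝ] ℝ | ‖y'‖ ≤ 1}) =>
            (∫⁻ ω, (‖f ω‖₊ : ℝ≥0∞) ^ p ∂ scalarVar ν y') ^ (1 / p)) y' hy')
          (le_iSup₂ (f := fun y' (_ : y' ∈ {y' : Y →L[ℝ] ℝ | ‖y'‖ ≤ 1}) =>
            (∫⁻ ω, (‖g ω‖₊ : ℝ≥0∞) ^ q ∂ scalarVar ν y') ^ (1 / q)) y' hy')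
end

section
/- L^p(ν, X, Y) is a closed subspace of L^p_w(ν, X, Y): if f ∈ L^p_w(ν, X, Y) and (f_m) is a sequence in L^p(ν, X, Y) with ‖f_m − f‖_{L^p_w(ν,X,Y)} → 0, then f ∈ L^p(ν, X, Y), i.e., ‖f‖ᵖ is ν-integrable. -/
open MeasureTheory ENNReal

variable {Ω X Y : Type*}

section aux
open NNReal
set_option linter.unusedSectionVars false


private lemma add_rpow_le {p : ℝ} (hp : 0 ≤ p) {x y δ : ℝ} (hx : 0 ≤ x) (hy : 0 ≤ y)
    (hδ : 0 < δ) : (x + y) ^ p ≤ ((1+δ)*x) ^ p + ((1+1/δ)*y) ^ p := by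
  have hδ' : 0 < 1/δ := by positivity
  have h1 : 0 ≤ (1+δ)*x := by positivity
  have h2 : 0 ≤ (1+1/δ)*y := by positivity
  have hmax : x + y ≤ max ((1+δ)*x) ((1+1/δ)*y) := by
    rcases le_or_gt y (δ*x) with h | h
    · refine le_trans ?_ (le_max_left _ _); nlinarith
    · refine le_trans ?_ (le_max_right _ _)
      have hxy : x ≤ y/δ := by rw [le_div_iff₀ hδ]; nlinarith
      have he : (1+1/δ)*y = y/δ + y := by field_simp; ring
      linarith
  calc (x+y)^p ≤ (max ((1+δ)*x) ((1+1/δ)*y))^p :=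
        Real.rpow_le_rpow (by positivity) hmax hp
    _ ≤ ((1+δ)*x) ^ p + ((1+1/δ)*y) ^ p := by
        rcases max_cases ((1+δ)*x) ((1+1/δ)*y) with ⟨he, _⟩ | ⟨he, _⟩ <;> rw [he]
        · nlinarith [Real.rpow_nonneg h2 p]
        · nlinarith [Real.rpow_nonneg h1 p]

private lemma key_ineq {p : ℝ} (hp : 0 ≤ p) {a b δ : ℝ} (ha : 0 ≤ a) (hb : 0 ≤ b)
    (hδ : 0 < δ) :
    |a ^ p - b ^ p| ≤ ((1+δ) ^ (2*p) - 1) * b ^ p + ((1+δ)*(1+1/δ)) ^ p * |a - b| ^ p := by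
  set d := |a - b| with hd
  have hdn : 0 ≤ d := abs_nonneg _
  have hδ1 : (0:ℝ) ≤ 1 + δ := by linarith
  have hab : a ≤ b + d := by rw [hd]; rcases abs_cases (a-b) with ⟨h,_⟩|⟨h,_⟩ <;> linarith
  have hba : b ≤ a + d := by rw [hd]; rcases abs_cases (a-b) with ⟨h,_⟩|⟨h,_⟩ <;> linarith
  have h1 : a ^ p ≤ ((1+δ)*b) ^ p + ((1+1/δ)*d) ^ p :=
    (Real.rpow_le_rpow ha hab hp).trans (add_rpow_le hp hb hdn hδ)
  have h2 : b ^ p ≤ ((1+δ)*a) ^ p + ((1+1/δ)*d) ^ p :=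
    (Real.rpow_le_rpow hb hba hp).trans (add_rpow_le hp ha hdn hδ)
  set A := (1+δ) ^ p with hA
  set K := (1+1/δ) ^ p with hK
  have hmul1 : ((1+δ)*b) ^ p = A * b ^ p := Real.mul_rpow hδ1 hb
  have hmul2 : ((1+δ)*a) ^ p = A * a ^ p := Real.mul_rpow hδ1 ha
  have hmul3 : ((1+1/δ)*d) ^ p = K * d ^ p := Real.mul_rpow (by positivity) hdn
  have hmul4 : ((1+δ)*(1+1/δ)) ^ p = A * K := Real.mul_rpow hδ1 (by positivity)
  have h2p : (1+δ) ^ (2*p) = A * A := by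
    rw [two_mul, Real.rpow_add (by linarith)]
  have hA1 : 1 ≤ A := Real.one_le_rpow (by linarith) hp
  have hK0 : 0 ≤ K := Real.rpow_nonneg (by positivity) p
  have hap : 0 ≤ a ^ p := Real.rpow_nonneg ha p
  have hbp : 0 ≤ b ^ p := Real.rpow_nonneg hb p
  have hdp : 0 ≤ d ^ p := Real.rpow_nonneg hdn p
  rw [hmul1, hmul3] at h1
  rw [hmul2, hmul3] at h2
  rw [h2p, hmul4, abs_sub_le_iff]
  constructor <;> nlinarith

section withOmega
variable [MeasurableSpace Ω]


lemma totalVariation_def (s : SignedMeasure Ω) :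
    s.totalVariation = s.toJordanDecomposition.posPart + s.toJordanDecomposition.negPart := rfl

instance (s : SignedMeasure Ω) : IsFiniteMeasure s.totalVariation := by
  rw [totalVariation_def]; infer_instance

variable [NormedAddCommGroup Y] [NormedSpace ℝ Y]

lemma scalarVar_eq (ν : VectorMeasure Ω Y) (y' : Y →L[ℝ] ℝ) :
    scalarVar ν y' = (scalarSigned ν y').totalVariation := rfl

instance (ν : VectorMeasure Ω Y) (y' : Y →L[ℝ] ℝ) : IsFiniteMeasure (scalarVar ν y') := by
  rw [scalarVar_eq]; infer_instance

lemma abs_signedIntegral_le (s : SignedMeasure Ω) (E : Set Ω) (h : Ω → ℝ)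
    (hint : Integrable h s.totalVariation) :
    |signedIntegral s E h| ≤ ∫ ω, |h ω| ∂s.totalVariation := by
  rw [totalVariation_def] at hint ⊢
  have hpos : Integrable h s.toJordanDecomposition.posPart := hint.left_of_add_measure
  have hneg : Integrable h s.toJordanDecomposition.negPart := hint.right_of_add_measure
  have h1 : |∫ ω in E, h ω ∂s.toJordanDecomposition.posPart| ≤
      ∫ ω in E, |h ω| ∂s.toJordanDecomposition.posPart := by
    simpa [Real.norm_eq_abs] using
      norm_integral_le_integral_norm (μ := s.toJordanDecomposition.posPart.restrict E) h
  have h2 : |∫ ω in E, h ω ∂s.toJordanDecomposition.negPart| ≤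
      ∫ ω in E, |h ω| ∂s.toJordanDecomposition.negPart := by
    simpa [Real.norm_eq_abs] using
      norm_integral_le_integral_norm (μ := s.toJordanDecomposition.negPart.restrict E) h
  have h3 : (∫ ω in E, |h ω| ∂s.toJordanDecomposition.posPart) +
      (∫ ω in E, |h ω| ∂s.toJordanDecomposition.negPart) ≤
      ∫ ω, |h ω| ∂(s.toJordanDecomposition.posPart + s.toJordanDecomposition.negPart) := by
    rw [← integral_add_measure (hpos.abs.restrict) (hneg.abs.restrict), ← Measure.restrict_add]
    exact setIntegral_le_integral hint.abs (ae_of_all _ fun ω => abs_nonneg _)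
  calc |signedIntegral s E h| ≤ _ + _ := abs_sub _ _
    _ ≤ _ := by exact le_trans (add_le_add h1 h2) h3

lemma signedIntegral_sub (s : SignedMeasure Ω) (E : Set Ω) {h₁ h₂ : Ω → ℝ}
    (hint₁ : Integrable h₁ s.totalVariation) (hint₂ : Integrable h₂ s.totalVariation) :
    signedIntegral s E (fun ω => h₁ ω - h₂ ω) =
      signedIntegral s E h₁ - signedIntegral s E h₂ := by
  rw [totalVariation_def] at hint₁ hint₂
  unfold signedIntegral
  rw [integral_sub hint₁.left_of_add_measure.restrict hint₂.left_of_add_measure.restrict,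
    integral_sub hint₁.right_of_add_measure.restrict hint₂.right_of_add_measure.restrict]
  ring

section withX
variable [NormedAddCommGroup X]


lemma nnnorm_norm_rpow (p : ℝ) (hp : 0 ≤ p) (x : X) :
    (‖‖x‖ ^ p‖₊ : ℝ≥0∞) = (‖x‖₊ : ℝ≥0∞) ^ p := by
  rw [Real.nnnorm_rpow_of_nonneg (norm_nonneg x), nnnorm_norm,
    ENNReal.coe_rpow_of_nonneg _ hp]

lemma integrable_norm_rpow' {μ : Measure Ω} {p : ℝ} (hp : 0 ≤ p) {g : Ω → X}
    (hg : StronglyMeasurable g)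
    (hfin : (∫⁻ ω, (‖g ω‖₊ : ℝ≥0∞) ^ p ∂μ) < ∞) :
    Integrable (fun ω => ‖g ω‖ ^ p) μ := by
  refine ⟨(hg.norm.measurable.pow_const p).aestronglyMeasurable, ?_⟩
  rw [hasFiniteIntegral_def]
  · skip
    calc (∫⁻ ω, ‖‖g ω‖ ^ p‖₊ ∂μ) = ∫⁻ ω, (‖g ω‖₊ : ℝ≥0∞) ^ p ∂μ := by
          exact lintegral_congr fun ω => nnnorm_norm_rpow p hp (g ω)
      _ < ∞ := hfin

lemma ofReal_integral_norm_rpow {μ : Measure Ω} {p : ℝ} (hp : 0 ≤ p) {g : Ω → X}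
    (hg : StronglyMeasurable g)
    (hfin : (∫⁻ ω, (‖g ω‖₊ : ℝ≥0∞) ^ p ∂μ) < ∞) :
    ENNReal.ofReal (∫ ω, ‖g ω‖ ^ p ∂μ) = ∫⁻ ω, (‖g ω‖₊ : ℝ≥0∞) ^ p ∂μ := by
  rw [ofReal_integral_eq_lintegral_ofReal (integrable_norm_rpow' hp hg hfin)
    (ae_of_all _ fun ω => Real.rpow_nonneg (norm_nonneg _) p)]
  refine lintegral_congr fun ω => ?_
  rw [← ENNReal.ofReal_rpow_of_nonneg (norm_nonneg _) hp, ofReal_norm, enorm_eq_nnnorm]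

lemma integral_norm_rpow_le {μ : Measure Ω} {p : ℝ} (hp : 0 ≤ p) {g : Ω → X}
    (hg : StronglyMeasurable g) {B : ℝ≥0∞}
    (hfin : (∫⁻ ω, (‖g ω‖₊ : ℝ≥0∞) ^ p ∂μ) ≤ B) (hB : B < ∞) :
    ∫ ω, ‖g ω‖ ^ p ∂μ ≤ B.toReal := by
  rw [← ENNReal.ofReal_le_iff_le_toReal hB.ne] at *
  · rwa [ofReal_integral_norm_rpow hp hg (lt_of_le_of_lt hfin hB)]

lemma lintegral_norm_rpow_sub_lt_top {μ : Measure Ω} {p : ℝ} (hp : 1 ≤ p) {g₁ g₂ : Ω → X}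
    (h₁ : StronglyMeasurable g₁) (h₂ : StronglyMeasurable g₂)
    (hf₁ : (∫⁻ ω, (‖g₁ ω‖₊ : ℝ≥0∞) ^ p ∂μ) < ∞)
    (hf₂ : (∫⁻ ω, (‖g₂ ω‖₊ : ℝ≥0∞) ^ p ∂μ) < ∞) :
    (∫⁻ ω, (‖g₁ ω - g₂ ω‖₊ : ℝ≥0∞) ^ p ∂μ) < ∞ := by
  have hp0 : 0 < p := lt_of_lt_of_le one_pos hp
  have key : eLpNorm' (g₁ - g₂) p μ ≤ eLpNorm' g₁ p μ + eLpNorm' g₂ p μ := by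
    have := eLpNorm'_add_le (μ := μ) (f := g₁) (g := -g₂) h₁.aestronglyMeasurable
      h₂.neg.aestronglyMeasurable hp
    rwa [eLpNorm'_neg, ← sub_eq_add_neg] at this
  have h1 : eLpNorm' g₁ p μ < ∞ :=
    ENNReal.rpow_lt_top_of_nonneg (by positivity) hf₁.ne
  have h2 : eLpNorm' g₂ p μ < ∞ :=
    ENNReal.rpow_lt_top_of_nonneg (by positivity) hf₂.ne
  have h3 : eLpNorm' (g₁ - g₂) p μ < ∞ := lt_of_le_of_lt key (ENNReal.add_lt_top.mpr ⟨h1, h2⟩)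
  have : (∫⁻ ω, (‖g₁ ω - g₂ ω‖₊ : ℝ≥0∞) ^ p ∂μ) = (eLpNorm' (g₁ - g₂) p μ) ^ p := by
    rw [eLpNorm', ← ENNReal.rpow_mul, one_div, inv_mul_cancel₀ hp0.ne', ENNReal.rpow_one]
    rfl
  rw [this]
  exact ENNReal.rpow_lt_top_of_nonneg hp0.le h3.ne

end withX

section withY
variable [NormedAddCommGroup Y] [NormedSpace ℝ Y]

lemma totalVariation_smul (c : ℝ≥0) (s : SignedMeasure Ω) :
    (c • s).totalVariation = c • s.totalVariation := by
  unfold SignedMeasure.totalVariation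
  rw [SignedMeasure.toJordanDecomposition_smul]
  simp [smul_add]

lemma scalarSigned_smul (ν : VectorMeasure Ω Y) (c : ℝ≥0) (y' : Y →L[ℝ] ℝ) :
    scalarSigned ν ((c : ℝ) • y') = c • scalarSigned ν y' := by
  ext E hE
  rw [VectorMeasure.smul_apply]
  unfold scalarSigned
  show ((c:ℝ) • y') (ν E) = c • y' (ν E)
  simp [NNReal.smul_def]

lemma scalarVar_smul (ν : VectorMeasure Ω Y) (c : ℝ≥0) (y' : Y →L[ℝ] ℝ) :
    scalarVar ν ((c : ℝ) • y') = c • scalarVar ν y' := by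
  show (scalarSigned ν ((c:ℝ) • y')).totalVariation = c • (scalarSigned ν y').totalVariation
  rw [scalarSigned_smul, totalVariation_smul]

lemma scalarSigned_zero (ν : VectorMeasure Ω Y) : scalarSigned ν (0 : Y →L[ℝ] ℝ) = 0 := by
  ext E hE
  unfold scalarSigned
  show (0 : Y →L[ℝ] ℝ) (ν E) = (0 : SignedMeasure Ω) E
  simp

lemma scalarVar_zero (ν : VectorMeasure Ω Y) : scalarVar ν (0 : Y →L[ℝ] ℝ) = 0 := by
  show (scalarSigned ν 0).totalVariation = 0
  rw [scalarSigned_zero, SignedMeasure.totalVariation_zero]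

lemma totalVariation_def' (s : SignedMeasure Ω) :
    s.totalVariation = s.toJordanDecomposition.posPart + s.toJordanDecomposition.negPart := rfl

lemma integral_totalVariation_eq (s : SignedMeasure Ω) (h : Ω → ℝ)
    (hint : Integrable h s.totalVariation) :
    ∃ E₁ E₂ : Set Ω, MeasurableSet E₁ ∧ MeasurableSet E₂ ∧
      (∫ ω, h ω ∂s.totalVariation) = signedIntegral s E₁ h - signedIntegral s E₂ h := by
  obtain ⟨S, hSm, hS1, hS2⟩ := s.toJordanDecomposition.mutuallySingular
  rw [totalVariation_def'] at hint
  have hpos : Integrable h s.toJordanDecomposition.posPart := hint.left_of_add_measure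
  have hneg : Integrable h s.toJordanDecomposition.negPart := hint.right_of_add_measure
  have e1 : (∫ ω in S, h ω ∂s.toJordanDecomposition.posPart) = 0 := by
    rw [Measure.restrict_eq_zero.mpr hS1, integral_zero_measure]
  have e2 : (∫ ω in Sᶜ, h ω ∂s.toJordanDecomposition.negPart) = 0 := by
    rw [Measure.restrict_eq_zero.mpr hS2, integral_zero_measure]
  have e3 : (∫ ω in Sᶜ, h ω ∂s.toJordanDecomposition.posPart) =
      ∫ ω, h ω ∂s.toJordanDecomposition.posPart := by
    have := integral_add_compl hSm hpos
    linarith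
  have e4 : (∫ ω in S, h ω ∂s.toJordanDecomposition.negPart) =
      ∫ ω, h ω ∂s.toJordanDecomposition.negPart := by
    have := integral_add_compl hSm hneg
    linarith
  refine ⟨Sᶜ, S, hSm.compl, hSm, ?_⟩
  rw [totalVariation_def', integral_add_measure hpos hneg]
  unfold signedIntegral
  rw [e1, e2, e3, e4]
  ring

end withY
end withOmega
end aux

section bsbound
variable [MeasurableSpace Ω] [NormedAddCommGroup Y] [NormedSpace ℝ Y]

lemma nuIntegrable_uniform_bound (ν : VectorMeasure Ω Y) {h : Ω → ℝ}
    (hint : NuIntegrable ν h) :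
    ∃ C : ℝ, 0 ≤ C ∧ ∀ y' : Y →L[ℝ] ℝ, ‖y'‖ ≤ 1 →
      (∫ ω, h ω ∂scalarVar ν y') ≤ C := by
  choose I hI using hint.2
  set g : {E : Set Ω // MeasurableSet E} → (Y →L[ℝ] ℝ) →L[ℝ] ℝ :=
    fun E => NormedSpace.inclusionInDoubleDual ℝ Y (I E.1 E.2) with hg
  have hgval : ∀ (E : Set Ω) (hE : MeasurableSet E) (y' : Y →L[ℝ] ℝ),
      g ⟨E, hE⟩ y' = y' (I E hE) := fun E hE y' => rfl
  have hpt : ∀ y' : Y →L[ℝ] ℝ, ∃ C, ∀ E, ‖g E y'‖ ≤ C := by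
    intro y'
    refine ⟨∫ ω, |h ω| ∂scalarVar ν y', fun E => ?_⟩
    have h1 : Integrable h (scalarSigned ν y').totalVariation := by
      rw [← scalarVar_eq]; exact hint.1 y'
    have h2 := abs_signedIntegral_le (scalarSigned ν y') E.1 h h1
    rw [hgval E.1 E.2, Real.norm_eq_abs, hI E.1 E.2 y']
    rwa [← scalarVar_eq] at h2
  obtain ⟨C', hC'⟩ := banach_steinhaus hpt
  have hC'0 : 0 ≤ C' := le_trans (norm_nonneg _) (hC' ⟨∅, MeasurableSet.empty⟩)
  have hb : ∀ (E : Set Ω) (hE : MeasurableSet E) (y' : Y →L[ℝ] ℝ), ‖y'‖ ≤ 1 →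
      |y' (I E hE)| ≤ C' := by
    intro E hE y' hy'
    have h1 := (g ⟨E, hE⟩).le_opNorm y'
    rw [hgval E hE, Real.norm_eq_abs] at h1
    calc |y' (I E hE)| ≤ ‖g ⟨E, hE⟩‖ * ‖y'‖ := h1
      _ ≤ C' * 1 := mul_le_mul (hC' _) hy' (norm_nonneg _) hC'0
      _ = C' := mul_one _
  refine ⟨2 * C', by linarith, fun y' hy' => ?_⟩
  obtain ⟨E₁, E₂, hE₁, hE₂, heq⟩ :=
    integral_totalVariation_eq (scalarSigned ν y') h
      (by rw [← scalarVar_eq]; exact hint.1 y')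
  rw [scalarVar_eq, heq, ← hI E₁ hE₁ y', ← hI E₂ hE₂ y']
  have b1 := hb E₁ hE₁ y' hy'
  have b2 := hb E₂ hE₂ y' hy'
  rcases abs_le.mp b1 with ⟨_, c1⟩
  rcases abs_le.mp b2 with ⟨c2, _⟩
  linarith

end bsbound

section helpers
open NNReal Filter
variable [MeasurableSpace Ω] [NormedAddCommGroup X] [NormedAddCommGroup Y] [NormedSpace ℝ Y]

lemma signedIntegral_rpow_diff_le (ν : VectorMeasure Ω Y) (y' : Y →L[ℝ] ℝ) {p : ℝ}
    (hp : 1 ≤ p) {g₁ g₂ : Ω → X} (h₁ : StronglyMeasurable g₁) (h₂ : StronglyMeasurable g₂)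
    (hf₁ : (∫⁻ ω, (‖g₁ ω‖₊ : ℝ≥0∞) ^ p ∂scalarVar ν y') < ∞)
    (hf₂ : (∫⁻ ω, (‖g₂ ω‖₊ : ℝ≥0∞) ^ p ∂scalarVar ν y') < ∞)
    (E : Set Ω) {δ : ℝ} (hδ : 0 < δ) :
    |signedIntegral (scalarSigned ν y') E (fun ω => ‖g₁ ω‖ ^ p) -
        signedIntegral (scalarSigned ν y') E (fun ω => ‖g₂ ω‖ ^ p)| ≤
      ((1+δ) ^ (2*p) - 1) * (∫ ω, ‖g₂ ω‖ ^ p ∂scalarVar ν y') +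
        ((1+δ)*(1+1/δ)) ^ p * (∫ ω, ‖g₁ ω - g₂ ω‖ ^ p ∂scalarVar ν y') := by
  have hp0 : (0:ℝ) ≤ p := le_trans zero_le_one hp
  have hfd := lintegral_norm_rpow_sub_lt_top hp h₁ h₂ hf₁ hf₂
  have i₁ := integrable_norm_rpow' hp0 h₁ hf₁
  have i₂ := integrable_norm_rpow' hp0 h₂ hf₂
  have id' := integrable_norm_rpow' hp0 (h₁.sub h₂) hfd
  simp only [Pi.sub_apply] at id'
  have hμ : scalarVar ν y' = (scalarSigned ν y').totalVariation := scalarVar_eq ν y'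
  rw [hμ] at i₁ i₂ id' ⊢
  rw [← signedIntegral_sub (scalarSigned ν y') E i₁ i₂]
  refine le_trans (abs_signedIntegral_le _ _ _ (i₁.sub i₂)) ?_
  have pointwise : ∀ ω, |‖g₁ ω‖ ^ p - ‖g₂ ω‖ ^ p| ≤
      ((1+δ) ^ (2*p) - 1) * ‖g₂ ω‖ ^ p + ((1+δ)*(1+1/δ)) ^ p * ‖g₁ ω - g₂ ω‖ ^ p := by
    intro ω
    refine le_trans (key_ineq hp0 (norm_nonneg _) (norm_nonneg _) hδ) ?_
    have h1 : |‖g₁ ω‖ - ‖g₂ ω‖| ^ p ≤ ‖g₁ ω - g₂ ω‖ ^ p :=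
      Real.rpow_le_rpow (abs_nonneg _) (abs_norm_sub_norm_le _ _) hp0
    have h2 : (0:ℝ) ≤ ((1+δ)*(1+1/δ)) ^ p := Real.rpow_nonneg (by positivity) _
    nlinarith
  calc (∫ ω, |‖g₁ ω‖ ^ p - ‖g₂ ω‖ ^ p| ∂(scalarSigned ν y').totalVariation)
      ≤ ∫ ω, (((1+δ) ^ (2*p) - 1) * ‖g₂ ω‖ ^ p
          + ((1+δ)*(1+1/δ)) ^ p * ‖g₁ ω - g₂ ω‖ ^ p) ∂(scalarSigned ν y').totalVariation := by
        exact integral_mono (i₁.sub i₂).abs ((i₂.const_mul _).add (id'.const_mul _)) pointwise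
    _ = _ := by
        rw [integral_add (i₂.const_mul _) (id'.const_mul _), integral_const_mul,
          integral_const_mul]

lemma lint_le_lpw (ν : VectorMeasure Ω Y) {p : ℝ} (hp : 1 ≤ p) (g : Ω → X)
    {y' : Y →L[ℝ] ℝ} (hy' : ‖y'‖ ≤ 1) :
    (∫⁻ ω, (‖g ω‖₊ : ℝ≥0∞) ^ p ∂scalarVar ν y') ≤ (lpwNorm ν p g) ^ p := by
  have hp0 : (0:ℝ) < p := lt_of_lt_of_le one_pos hp
  have h1 : (∫⁻ ω, (‖g ω‖₊ : ℝ≥0∞) ^ p ∂scalarVar ν y') ^ (1/p) ≤ lpwNorm ν p g :=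
    le_iSup₂ (f := fun (y' : Y →L[ℝ] ℝ) (_ : y' ∈ {y' : Y →L[ℝ] ℝ | ‖y'‖ ≤ 1}) =>
      (∫⁻ ω, (‖g ω‖₊ : ℝ≥0∞) ^ p ∂ scalarVar ν y') ^ (1/p)) y' hy'
  have h2 := ENNReal.rpow_le_rpow h1 hp0.le
  rwa [← ENNReal.rpow_mul, one_div, inv_mul_cancel₀ hp0.ne', ENNReal.rpow_one] at h2

lemma tendsto_lint_of_lpw (ν : VectorMeasure Ω Y) {p : ℝ} (hp : 1 ≤ p) (g : ℕ → Ω → X)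
    (hg : Filter.Tendsto (fun m => lpwNorm ν p (g m)) Filter.atTop (nhds 0))
    (y' : Y →L[ℝ] ℝ) :
    Filter.Tendsto (fun m => ∫⁻ ω, (‖g m ω‖₊ : ℝ≥0∞) ^ p ∂scalarVar ν y')
      Filter.atTop (nhds 0) := by
  have hp0 : (0:ℝ) < p := lt_of_lt_of_le one_pos hp
  by_cases hy : y' = 0
  · subst hy
    rw [scalarVar_zero]
    simpa using tendsto_const_nhds
  · set c : ℝ≥0 := ‖y'‖₊ with hc
    have hc0 : (c : ℝ≥0∞) ≠ 0 := by
      simp [hc, nnnorm_eq_zero, hy]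
    have hctop : (c : ℝ≥0∞) ≠ ∞ := ENNReal.coe_ne_top
    set u : Y →L[ℝ] ℝ := ‖y'‖⁻¹ • y' with hu
    have hu1 : ‖u‖ ≤ 1 := by
      have h := norm_smul (‖y'‖⁻¹) y'
      rw [hu, h, norm_inv, norm_norm, inv_mul_cancel₀ (norm_ne_zero_iff.mpr hy)]
    have hyu : y' = (c : ℝ) • u := by
      rw [hu, hc, smul_smul, coe_nnnorm, mul_inv_cancel₀ (norm_ne_zero_iff.mpr hy), one_smul]
    have hmeas : scalarVar ν y' = c • scalarVar ν u := by
      rw [hyu] at *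
      exact scalarVar_smul ν c u
    rw [ENNReal.tendsto_nhds_zero]
    intro ε hε
    have hκ : (0:ℝ≥0∞) < (ε / c) ^ (1/p) := by
      have hd : (0:ℝ≥0∞) < ε / c := ENNReal.div_pos hε.ne' hctop
      exact ENNReal.rpow_pos_of_nonneg hd (by positivity)
    filter_upwards [ENNReal.tendsto_nhds_zero.mp hg _ hκ] with m hm
    have hle : (∫⁻ ω, (‖g m ω‖₊ : ℝ≥0∞) ^ p ∂scalarVar ν u) ≤ ε / c := by
      refine le_trans (lint_le_lpw ν hp (g m) hu1) ?_
      have := ENNReal.rpow_le_rpow hm hp0.le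
      rwa [← ENNReal.rpow_mul, one_div, inv_mul_cancel₀ hp0.ne', ENNReal.rpow_one] at this
    calc (∫⁻ ω, (‖g m ω‖₊ : ℝ≥0∞) ^ p ∂scalarVar ν y')
        = c * ∫⁻ ω, (‖g m ω‖₊ : ℝ≥0∞) ^ p ∂scalarVar ν u := by
          rw [hmeas, lintegral_smul_measure, ENNReal.smul_def, smul_eq_mul]
      _ ≤ c * (ε / c) := by exact mul_le_mul_right hle _
      _ ≤ ε := ENNReal.mul_div_le

lemma exists_delta {p : ℝ} (A ε : ℝ) (hε : 0 < ε) :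
    ∃ δ : ℝ, 0 < δ ∧ ((1+δ) ^ (2*p) - 1) * A < ε := by
  have h2 : ContinuousAt (fun t : ℝ => t ^ (2*p)) ((1:ℝ)+0) := by
    simpa using Real.continuousAt_rpow_const ((1:ℝ)+0) (2*p) (Or.inl (by norm_num))
  have h1 : ContinuousAt (fun δ : ℝ => (1:ℝ)+δ) 0 := by fun_prop
  have hcont : ContinuousAt (fun δ : ℝ => ((1+δ) ^ (2*p) - 1) * A) 0 :=
    (((h2.comp h1).sub continuousAt_const).mul continuousAt_const)
  have hval : ((1+(0:ℝ)) ^ (2*p) - 1) * A = 0 := by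
    norm_num
  rw [Metric.continuousAt_iff] at hcont
  obtain ⟨d, hd0, hd⟩ := hcont ε hε
  refine ⟨d/2, by linarith, ?_⟩
  have := hd (x := d/2) (by rw [Real.dist_eq, sub_zero, abs_of_pos (by linarith)]; linarith)
  rw [Real.dist_eq, hval, sub_zero] at this
  calc ((1+d/2) ^ (2*p) - 1) * A ≤ |((1+d/2) ^ (2*p) - 1) * A| := le_abs_self _
    _ < ε := this

lemma norm_le_of_unit_ball (z : Y) {M : ℝ} (hM : 0 ≤ M)
    (h : ∀ y' : Y →L[ℝ] ℝ, ‖y'‖ ≤ 1 → |y' z| ≤ M) : ‖z‖ ≤ M := by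
  refine NormedSpace.norm_le_dual_bound ℝ z hM (fun y'' => ?_)
  rcases eq_or_ne y'' 0 with rfl | hy
  · simpa using mul_nonneg hM (norm_nonneg (0 : NormedSpace.Dual ℝ Y))
  · have hu1 : ‖‖y''‖⁻¹ • y''‖ ≤ 1 := by
      have hns := norm_smul (‖y''‖⁻¹) y''
      rw [hns, norm_inv, norm_norm, inv_mul_cancel₀ (norm_ne_zero_iff.mpr hy)]
    have hz := h _ hu1
    rw [ContinuousLinearMap.smul_apply, smul_eq_mul, abs_mul, abs_inv, abs_norm] at hz
    rw [Real.norm_eq_abs]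
    have hpos : 0 < ‖y''‖ := norm_pos_iff.mpr hy
    calc |y'' z| = ‖y''‖ * (‖y''‖⁻¹ * |y'' z|) := by field_simp
      _ ≤ ‖y''‖ * M := by nlinarith
      _ = M * ‖y''‖ := mul_comm _ _

end helpers

variable [MeasurableSpace Ω] [NormedAddCommGroup X] [CompleteSpace X]
  [NormedAddCommGroup Y] [NormedSpace ℝ Y] [CompleteSpace Y]

theorem lp_closed_in_lpw (ν : VectorMeasure Ω Y) (p : ℝ) (hp : 1 ≤ p)
    (f : Ω → X) (hf : MemLpw ν p f) (F : ℕ → Ω → X) (hF : ∀ m, MemLpw ν p (F m))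
    (hFi : ∀ m, NuIntegrable ν (fun ω => ‖F m ω‖ ^ p))
    (hconv : Filter.Tendsto (fun m => lpwNorm ν p (fun ω => F m ω - f ω))
      Filter.atTop (nhds 0)) :
    NuIntegrable ν (fun ω => ‖f ω‖ ^ p) := by
  have hp0 : (0:ℝ) < p := lt_of_lt_of_le one_pos hp
  have hp0' : (0:ℝ) ≤ p := hp0.le
  have hnn : ∀ (g : Ω → X) (μ : Measure Ω), 0 ≤ ∫ ω, ‖g ω‖ ^ p ∂μ :=
    fun g μ => integral_nonneg fun ω => Real.rpow_nonneg (norm_nonneg _) _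
  have hfint : ∀ y' : Y →L[ℝ] ℝ, Integrable (fun ω => ‖f ω‖ ^ p) (scalarVar ν y') :=
    fun y' => integrable_norm_rpow' hp0' hf.1 (hf.2 y')
  refine ⟨hfint, fun E hE => ?_⟩
  have hdfin : ∀ (m : ℕ) (y' : Y →L[ℝ] ℝ),
      (∫⁻ ω, (‖F m ω - f ω‖₊ : ℝ≥0∞) ^ p ∂scalarVar ν y') < ∞ :=
    fun m y' => lintegral_norm_rpow_sub_lt_top hp (hF m).1 hf.1 ((hF m).2 y') (hf.2 y')
  choose I hI using fun m => (hFi m).2 E hE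
  -- a uniform bound on the unit ball for the weak `L^p` integrals of `f`
  obtain ⟨m₀, hm₀⟩ := (ENNReal.tendsto_nhds_zero.mp hconv 1 one_pos).exists
  obtain ⟨C₀, hC₀0, hC₀⟩ := nuIntegrable_uniform_bound ν (hFi m₀)
  set Abd : ℝ≥0∞ := 1 + (ENNReal.ofReal C₀) ^ (1/p) with hAbd
  have hAbdtop : Abd ^ p ≠ ∞ := by
    refine (ENNReal.rpow_lt_top_of_nonneg hp0' ?_).ne
    rw [hAbd]
    exact (ENNReal.add_lt_top.mpr ⟨ENNReal.one_lt_top,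
      ENNReal.rpow_lt_top_of_nonneg (by positivity) ENNReal.ofReal_ne_top⟩).ne
  have hA : ∀ y' : Y →L[ℝ] ℝ, ‖y'‖ ≤ 1 →
      (∫⁻ ω, (‖f ω‖₊ : ℝ≥0∞) ^ p ∂scalarVar ν y') ≤ Abd ^ p := by
    intro y' hy'
    have hF0lint : (∫⁻ ω, (‖F m₀ ω‖₊ : ℝ≥0∞) ^ p ∂scalarVar ν y') ≤ ENNReal.ofReal C₀ := by
      rw [← ofReal_integral_norm_rpow hp0' (hF m₀).1 ((hF m₀).2 y')]
      exact ENNReal.ofReal_le_ofReal (hC₀ y' hy')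
    have heq : (fun ω => f ω - F m₀ ω) + F m₀ = f := by funext ω; simp
    have htri := eLpNorm'_add_le (μ := scalarVar ν y') (f := fun ω => f ω - F m₀ ω)
      (g := F m₀) (hf.1.sub (hF m₀).1).aestronglyMeasurable (hF m₀).1.aestronglyMeasurable hp
    rw [heq] at htri
    have hneg : eLpNorm' (fun ω => f ω - F m₀ ω) p (scalarVar ν y')
        = eLpNorm' (fun ω => F m₀ ω - f ω) p (scalarVar ν y') := by
      rw [show (fun ω => f ω - F m₀ ω) = -(fun ω => F m₀ ω - f ω) by funext ω; simp]
      exact eLpNorm'_neg _ _ _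
    have h1 : eLpNorm' (fun ω => F m₀ ω - f ω) p (scalarVar ν y') ≤ 1 := by
      refine le_trans ?_ hm₀
      exact le_iSup₂ (f := fun (y' : Y →L[ℝ] ℝ) (_ : y' ∈ {y' : Y →L[ℝ] ℝ | ‖y'‖ ≤ 1}) =>
        (∫⁻ ω, (‖F m₀ ω - f ω‖₊ : ℝ≥0∞) ^ p ∂ scalarVar ν y') ^ (1/p)) y' hy'
    have h2 : eLpNorm' (F m₀) p (scalarVar ν y') ≤ (ENNReal.ofReal C₀) ^ (1/p) :=
      ENNReal.rpow_le_rpow hF0lint (by positivity)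
    have h3 : eLpNorm' f p (scalarVar ν y') ≤ Abd := by
      rw [hAbd]
      exact le_trans htri (add_le_add (hneg ▸ h1) h2)
    have h4 := ENNReal.rpow_le_rpow h3 hp0'
    have h5 : (∫⁻ ω, (‖f ω‖₊ : ℝ≥0∞) ^ p ∂scalarVar ν y')
        = (eLpNorm' f p (scalarVar ν y')) ^ p := by
      rw [eLpNorm', ← ENNReal.rpow_mul, one_div, inv_mul_cancel₀ hp0.ne', ENNReal.rpow_one]
      rfl
    rw [h5]
    exact h4
  set A : ℝ := (Abd ^ p).toReal with hA'
  have hA0 : 0 ≤ A := ENNReal.toReal_nonneg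
  have hAreal : ∀ y' : Y →L[ℝ] ℝ, ‖y'‖ ≤ 1 → (∫ ω, ‖f ω‖ ^ p ∂scalarVar ν y') ≤ A :=
    fun y' hy' => integral_norm_rpow_le hp0' hf.1 (hA y' hy')
      (lt_of_le_of_ne le_top hAbdtop)
  -- uniform smallness of the difference integrals on the unit ball
  have hDreal : ∀ (m : ℕ) {y' : Y →L[ℝ] ℝ}, ‖y'‖ ≤ 1 → ∀ {κ : ℝ}, 0 < κ →
      lpwNorm ν p (fun ω => F m ω - f ω) ≤ (ENNReal.ofReal κ) ^ (1/p) →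
      (∫ ω, ‖F m ω - f ω‖ ^ p ∂scalarVar ν y') ≤ κ := by
    intro m y' hy' κ hκ hLm
    have h1 : (∫⁻ ω, (‖F m ω - f ω‖₊ : ℝ≥0∞) ^ p ∂scalarVar ν y') ≤ ENNReal.ofReal κ := by
      refine le_trans (lint_le_lpw ν hp (fun ω => F m ω - f ω) hy') ?_
      have h2 := ENNReal.rpow_le_rpow hLm hp0'
      rwa [← ENNReal.rpow_mul, one_div, inv_mul_cancel₀ hp0.ne', ENNReal.rpow_one] at h2
    have h3 := integral_norm_rpow_le hp0' ((hF m).1.sub hf.1) h1 ENNReal.ofReal_lt_top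
    rwa [ENNReal.toReal_ofReal hκ.le] at h3
  -- the sequence `I` is Cauchy
  have hcauchy : CauchySeq I := by
    rw [Metric.cauchySeq_iff]
    intro ε hε
    obtain ⟨δ, hδ0, hδε⟩ := exists_delta (p := p) A (ε/8) (by linarith)
    have hεδ0 : 0 ≤ (1+δ) ^ (2*p) - 1 := by
      have h1 : (1:ℝ) ≤ (1+δ) ^ (2*p) := Real.one_le_rpow (by linarith) (by positivity)
      linarith
    set Cδ : ℝ := ((1+δ)*(1+1/δ)) ^ p with hCδ
    have hCδ0 : 0 < Cδ := Real.rpow_pos_of_pos (by positivity) _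
    set κ : ℝ := ε/8/Cδ with hκdef
    have hκ0 : 0 < κ := div_pos (by linarith) hCδ0
    have hev := ENNReal.tendsto_nhds_zero.mp hconv ((ENNReal.ofReal κ) ^ (1/p))
      (ENNReal.rpow_pos_of_nonneg (ENNReal.ofReal_pos.mpr hκ0) (by positivity))
    obtain ⟨N, hN⟩ := Filter.eventually_atTop.mp hev
    refine ⟨N, fun m hm n hn => ?_⟩
    rw [dist_eq_norm]
    have key : ∀ (k : ℕ), N ≤ k → ∀ (y' : Y →L[ℝ] ℝ), ‖y'‖ ≤ 1 →
        |y' (I k) - signedIntegral (scalarSigned ν y') E (fun ω => ‖f ω‖ ^ p)| ≤ ε/4 := by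
      intro k hk y' hy'
      rw [hI k y']
      refine le_trans (signedIntegral_rpow_diff_le ν y' hp (hF k).1 hf.1
        ((hF k).2 y') (hf.2 y') E hδ0) ?_
      have t1 : ((1+δ) ^ (2*p) - 1) * (∫ ω, ‖f ω‖ ^ p ∂scalarVar ν y') ≤ ε/8 := by
        have h1 := hAreal y' hy'
        have h2 := hnn f (scalarVar ν y')
        nlinarith
      have t2 : Cδ * (∫ ω, ‖F k ω - f ω‖ ^ p ∂scalarVar ν y') ≤ ε/8 := by
        have h1 := hDreal k hy' hκ0 (hN k hk)
        have h2 := hnn (fun ω => F k ω - f ω) (scalarVar ν y')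
        calc Cδ * (∫ ω, ‖F k ω - f ω‖ ^ p ∂scalarVar ν y') ≤ Cδ * κ := by nlinarith
          _ = ε/8 := by rw [hκdef]; field_simp
      linarith
    have hball : ∀ (y' : Y →L[ℝ] ℝ), ‖y'‖ ≤ 1 → |y' (I m - I n)| ≤ ε/2 := by
      intro y' hy'
      rw [map_sub]
      have h1 := key m hm y' hy'
      have h2 := key n hn y' hy'
      set S := signedIntegral (scalarSigned ν y') E (fun ω => ‖f ω‖ ^ p)
      calc |y' (I m) - y' (I n)| ≤ |y' (I m) - S| + |S - y' (I n)| := abs_sub_le _ _ _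
        _ ≤ ε/4 + ε/4 := by rw [abs_sub_comm S]; exact add_le_add h1 h2
        _ = ε/2 := by ring
    have hfin : ‖I m - I n‖ ≤ ε/2 := norm_le_of_unit_ball _ (by linarith) hball
    linarith
  obtain ⟨Ilim, hlim⟩ := cauchySeq_tendsto_of_complete hcauchy
  refine ⟨Ilim, fun y' => ?_⟩
  have h1 : Filter.Tendsto (fun m => y' (I m)) Filter.atTop (nhds (y' Ilim)) :=
    (y'.continuous.tendsto Ilim).comp hlim
  have hDy : Filter.Tendsto (fun m => ∫ ω, ‖F m ω - f ω‖ ^ p ∂scalarVar ν y')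
      Filter.atTop (nhds 0) := by
    have hlint := tendsto_lint_of_lpw ν hp (fun m => fun ω => F m ω - f ω) hconv y'
    have heq : (fun m => ∫ ω, ‖F m ω - f ω‖ ^ p ∂scalarVar ν y')
        = fun m => (∫⁻ ω, (‖F m ω - f ω‖₊ : ℝ≥0∞) ^ p ∂scalarVar ν y').toReal := by
      funext m
      rw [← ofReal_integral_norm_rpow (g := fun ω => F m ω - f ω) hp0' ((hF m).1.sub hf.1) (hdfin m y'),
        ENNReal.toReal_ofReal (hnn (fun ω => F m ω - f ω) (scalarVar ν y'))]
    rw [heq]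
    have h2 := (ENNReal.tendsto_toReal (a := 0) (by simp)).comp hlint
    rw [ENNReal.toReal_zero] at h2
    exact h2
  have h2 : Filter.Tendsto (fun m => y' (I m)) Filter.atTop
      (nhds (signedIntegral (scalarSigned ν y') E (fun ω => ‖f ω‖ ^ p))) := by
    rw [Metric.tendsto_atTop]
    intro ε hε
    set Ay : ℝ := ∫ ω, ‖f ω‖ ^ p ∂scalarVar ν y' with hAy
    have hAy0 : 0 ≤ Ay := hnn f (scalarVar ν y')
    obtain ⟨δ, hδ0, hδε⟩ := exists_delta (p := p) Ay (ε/2) (by linarith)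
    set Cδ : ℝ := ((1+δ)*(1+1/δ)) ^ p with hCδ
    have hCδ0 : 0 < Cδ := Real.rpow_pos_of_pos (by positivity) _
    have hev : ∀ᶠ m in Filter.atTop,
        Cδ * (∫ ω, ‖F m ω - f ω‖ ^ p ∂scalarVar ν y') < ε/2 := by
      have hcont := hDy.const_mul Cδ
      rw [mul_zero] at hcont
      exact hcont.eventually_lt_const (by linarith)
    obtain ⟨N, hN⟩ := Filter.eventually_atTop.mp hev
    refine ⟨N, fun m hm => ?_⟩
    rw [Real.dist_eq, hI m y']
    have hb := signedIntegral_rpow_diff_le ν y' hp (hF m).1 hf.1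
      ((hF m).2 y') (hf.2 y') E hδ0
    have h3 := hN m hm
    rw [← hAy] at hb
    linarith
  exact tendsto_nhds_unique h1 h2
end

section
/- Let Y be a Banach space with the B-P property (containing no copy of c₀) and ν : 𝒜 → Y a σ-additive vector measure. Then for 1 ≤ p < ∞, L^p(ν, X, Y) = L^p_w(ν, X, Y): every strongly ν-measurable f : Ω → X with ∫_Ω ‖f‖ᵖ d|y'∘ν| < ∞ for all y' ∈ Y' has ‖f‖ᵖ ν-integrable. -/
open MeasureTheory ENNReal
open Filter Topology

variable {Ω X Y : Type*}

section Auxiliary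

open Filter Topology

variable [NormedAddCommGroup Y] [NormedSpace ℝ Y]

lemma wuc_uniform_bound {ι : Type*} (y : ι → Y)
    (hy : ∀ y' : Y →L[ℝ] ℝ, Summable fun j => |y' (y j)|) :
    ∃ B : ℝ, 0 ≤ B ∧ ∀ (y' : Y →L[ℝ] ℝ) (s : Finset ι),
      ∑ j ∈ s, |y' (y j)| ≤ B * ‖y'‖ := by
  classical
  set g : Finset ι × (ι → Bool) → (Y →L[ℝ] ℝ) →L[ℝ] ℝ := fun k =>
    NormedSpace.inclusionInDoubleDual ℝ Y (∑ j ∈ k.1, (if k.2 j then (1:ℝ) else -1) • y j)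
    with hg
  have hpt : ∀ y' : Y →L[ℝ] ℝ, ∃ C, ∀ k, ‖g k y'‖ ≤ C := by
    intro y'
    refine ⟨∑' j, |y' (y j)|, fun k => ?_⟩
    have : g k y' = ∑ j ∈ k.1, (if k.2 j then (1:ℝ) else -1) * y' (y j) := by
      simp only [hg, map_sum, ContinuousLinearMap.sum_apply, NormedSpace.dual_def,
        _root_.map_smul, ContinuousLinearMap.smul_apply, smul_eq_mul]
    rw [Real.norm_eq_abs, this]
    calc |∑ j ∈ k.1, (if k.2 j then (1:ℝ) else -1) * y' (y j)|
        ≤ ∑ j ∈ k.1, |(if k.2 j then (1:ℝ) else -1) * y' (y j)| := Finset.abs_sum_le_sum_abs _ _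
      _ = ∑ j ∈ k.1, |y' (y j)| := by
          refine Finset.sum_congr rfl fun j _ => ?_
          rcases Bool.dichotomy (k.2 j) with h | h <;> simp [h, abs_mul]
      _ ≤ ∑' j, |y' (y j)| := Summable.sum_le_tsum _ (fun i _ => abs_nonneg _) (hy y')
  obtain ⟨C, hC⟩ := banach_steinhaus hpt
  refine ⟨max C 0, le_max_right _ _, fun y' s => ?_⟩
  set σ : ι → Bool := fun j => decide (0 ≤ y' (y j)) with hσ
  have key : ∑ j ∈ s, |y' (y j)| = g (s, σ) y' := by
    have : g (s, σ) y' = ∑ j ∈ s, (if σ j then (1:ℝ) else -1) * y' (y j) := by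
      simp only [hg, map_sum, ContinuousLinearMap.sum_apply, NormedSpace.dual_def,
        _root_.map_smul, ContinuousLinearMap.smul_apply, smul_eq_mul]
    rw [this]
    refine Finset.sum_congr rfl fun j _ => ?_
    by_cases h : 0 ≤ y' (y j)
    · simp [hσ, h, abs_of_nonneg h]
    · simp [hσ, h, abs_of_neg (lt_of_not_ge h)]
  rw [key]
  calc g (s, σ) y' ≤ ‖g (s, σ) y'‖ := le_abs_self _
    _ ≤ ‖g (s, σ)‖ * ‖y'‖ := ContinuousLinearMap.le_opNorm _ _
    _ ≤ max C 0 * ‖y'‖ :=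
        mul_le_mul_of_nonneg_right ((hC _).trans (le_max_left _ _)) (norm_nonneg _)

lemma sum_comp_le_tsum {v : ℕ → ℝ} (hv : ∀ n, 0 ≤ v n) (hsv : Summable v)
    (s : Finset ℕ) {w : ℕ → ℕ} (hw : Set.InjOn w s) :
    ∑ k ∈ s, v (w k) ≤ ∑' n, v n := by
  classical
  rw [← Finset.sum_image (fun a ha b hb hab => hw ha hb hab)]
  exact Summable.sum_le_tsum _ (fun i _ => hv i) hsv

lemma rosenthal_sub {a : ℕ → ℕ → ℝ} {B ε : ℝ} (ha : ∀ j k, 0 ≤ a j k)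
    (hrow : ∀ j, ∀ s : Finset ℕ, ∑ k ∈ s, a j k ≤ B) (hε : 0 < ε) :
    ∃ m : ℕ → ℕ, StrictMono m ∧
      ∀ j, ∀ s : Finset ℕ, ∑ k ∈ s.erase j, a (m j) (m k) ≤ ε := by
  classical
  have hS : ∀ j, Summable (a j) := fun j =>
    summable_of_sum_range_le (ha j) (fun n => hrow j _)
  have hmem : ∀ j, a j ∈ Set.univ.pi (fun _ : ℕ => Set.Icc (0:ℝ) B) := by
    intro j k _
    exact ⟨ha j k, by simpa using hrow j {k}⟩
  have hcomp : IsSeqCompact (Set.univ.pi (fun _ : ℕ => Set.Icc (0:ℝ) B)) :=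
    (isCompact_univ_pi fun _ => isCompact_Icc).isSeqCompact
  obtain ⟨c, hcK, φ, hφ, hconv⟩ := hcomp hmem
  have hpt : ∀ k, Tendsto (fun j => a (φ j) k) atTop (𝓝 (c k)) :=
    tendsto_pi_nhds.1 hconv
  have hc0 : ∀ k, 0 ≤ c k := fun k => (hcK k (Set.mem_univ _)).1
  have hcsum : Summable c := by
    apply summable_of_sum_range_le hc0
    intro n
    exact le_of_tendsto (tendsto_finset_sum (Finset.range n) (fun k _ => hpt k))
      (Eventually.of_forall fun j => hrow (φ j) (Finset.range n))
  have htail : Tendsto (fun n => ∑' k, c (k + n)) atTop (𝓝 0) :=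
    tendsto_sum_nat_add c
  obtain ⟨K₀, hK₀⟩ := (htail.eventually_le_const (by positivity : (0:ℝ) < ε/4)).exists
  -- the recursive choice of the subsequence
  set r : ℕ → ℕ → Prop := fun x y => x < y ∧ (∑' k, a (φ x) (k + φ y)) ≤ ε/2 ∧
      |a (φ y) (φ x) - c (φ x)| ≤ ε/4 * (1/2)^(x+1) with hr
  have hex : ∀ s : Finset ℕ, (∀ x ∈ s, K₀ ≤ x) → ∃ y, K₀ ≤ y ∧ ∀ x ∈ s, r x y := by
    intro s _
    have h2 : ∀ x ∈ s, ∀ᶠ y : ℕ in atTop, r x y := by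
      intro x _
      have hφtop : Tendsto φ atTop atTop := hφ.tendsto_atTop
      have ht : Tendsto (fun N => ∑' k, a (φ x) (k + N)) atTop (𝓝 0) :=
        tendsto_sum_nat_add _
      have e2 : ∀ᶠ y : ℕ in atTop, (∑' k, a (φ x) (k + φ y)) ≤ ε/2 :=
        hφtop.eventually (ht.eventually_le_const (by positivity : (0:ℝ) < ε/2))
      have e3 : ∀ᶠ y : ℕ in atTop, |a (φ y) (φ x) - c (φ x)| ≤ ε/4 * (1/2)^(x+1) := by
        have hb : (0:ℝ) < ε/4 * (1/2)^(x+1) := by positivity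
        have := Metric.tendsto_nhds.1 (hpt (φ x)) _ hb
        filter_upwards [this] with y hy
        rw [Real.dist_eq] at hy
        exact hy.le
      filter_upwards [e2, e3, eventually_gt_atTop x] with y hy2 hy3 hy1
      exact ⟨hy1, hy2, hy3⟩
    obtain ⟨y, hy⟩ := ((s.eventually_all.2 h2).and (eventually_ge_atTop K₀)).exists
    exact ⟨y, hy.2, hy.1⟩
  obtain ⟨n, hnP, hnr⟩ := exists_seq_of_forall_finset_exists (fun x => K₀ ≤ x) r hex
  have hmono : StrictMono n := strictMono_nat_of_lt_succ fun i => (hnr i (i+1) (Nat.lt_succ_self i)).1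
  refine ⟨φ ∘ n, hφ.comp hmono, fun j s => ?_⟩
  set m : ℕ → ℕ := φ ∘ n with hm
  have hminj : Function.Injective m := (hφ.comp hmono).injective
  have hmr : ∀ k, m k = φ (n k) := fun _ => rfl
  have hmK : ∀ k, K₀ ≤ m k := fun k => le_trans (hnP k) hφ.le_apply
  -- split the sum
  have hsplit : ∑ k ∈ s.erase j, a (m j) (m k) =
      (∑ k ∈ (s.erase j).filter (· < j), a (m j) (m k)) +
      (∑ k ∈ (s.erase j).filter (¬ · < j), a (m j) (m k)) :=
    (Finset.sum_filter_add_sum_filter_not _ _ _).symm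
  rw [hsplit]
  have h1 : (∑ k ∈ (s.erase j).filter (· < j), a (m j) (m k)) ≤ ε/2 := by
    have step : ∀ k ∈ (s.erase j).filter (· < j),
        a (m j) (m k) ≤ c (m k) + ε/4 * (1/2)^(n k + 1) := by
      intro k hk
      have hkj : k < j := (Finset.mem_filter.1 hk).2
      have h3 := (hnr k j hkj).2.2
      have habs := abs_le.1 h3
      rw [hmr j, hmr k]
      linarith [habs.1, habs.2]
    calc (∑ k ∈ (s.erase j).filter (· < j), a (m j) (m k))
        ≤ ∑ k ∈ (s.erase j).filter (· < j), (c (m k) + ε/4 * (1/2)^(n k + 1)) :=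
          Finset.sum_le_sum step
      _ = (∑ k ∈ (s.erase j).filter (· < j), c (m k)) +
          ε/4 * (∑ k ∈ (s.erase j).filter (· < j), (1/2:ℝ)^(n k + 1)) := by
          rw [Finset.sum_add_distrib, Finset.mul_sum]
      _ ≤ ε/4 + ε/4 * 1 := by
          gcongr
          · -- sum of c over distinct indices ≥ K₀
            have : ∑ k ∈ (s.erase j).filter (· < j), c (m k) =
                ∑ k ∈ (s.erase j).filter (· < j), (fun t => c (t + K₀)) (m k - K₀) := by
              refine Finset.sum_congr rfl fun k _ => ?_
              simp [Nat.sub_add_cancel (hmK k)]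
            rw [this]
            refine le_trans (sum_comp_le_tsum (fun t => hc0 _)
              ((summable_nat_add_iff K₀).2 hcsum) _ ?_) hK₀
            intro x hx y hy hxy
            have hxy' : m x - K₀ = m y - K₀ := hxy
            have hx' := hmK x; have hy' := hmK y
            exact hminj (by omega)
          · -- geometric bound
            have hg2 : Summable (fun t : ℕ => (1/2:ℝ)^t) :=
              summable_geometric_of_lt_one (by norm_num) (by norm_num)
            have hg : Summable (fun t : ℕ => (1/2:ℝ)^(t+1)) := by
              simpa only [pow_succ] using hg2.mul_right (1/2:ℝ)
            have hval : ∑' t : ℕ, (1/2:ℝ)^(t+1) = 1 := by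
              calc ∑' t : ℕ, (1/2:ℝ)^(t+1) = ∑' t : ℕ, (1/2:ℝ)^t * (1/2) := by
                    simp only [pow_succ]
                _ = (∑' t : ℕ, (1/2:ℝ)^t) * (1/2) := tsum_mul_right
                _ = 1 := by
                    rw [tsum_geometric_of_lt_one (by norm_num) (by norm_num)]
                    norm_num
            refine le_trans (sum_comp_le_tsum (fun t => by positivity) hg _
              (fun x _ y _ hxy => hmono.injective hxy)) (le_of_eq hval)
      _ ≤ ε/2 := by linarith
  have h2' : (∑ k ∈ (s.erase j).filter (¬ · < j), a (m j) (m k)) ≤ ε/2 := by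
    have htail2 : (∑' k, a (m j) (k + m (j+1))) ≤ ε/2 := (hnr j (j+1) (Nat.lt_succ_self j)).2.1
    have hge : ∀ k ∈ (s.erase j).filter (¬ · < j), m (j+1) ≤ m k := by
      intro k hk
      have h1 := Finset.mem_filter.1 hk
      have hne : k ≠ j := Finset.ne_of_mem_erase h1.1
      have hkj : j + 1 ≤ k := by omega
      exact (hφ.comp hmono).monotone hkj
    have : ∑ k ∈ (s.erase j).filter (¬ · < j), a (m j) (m k) =
        ∑ k ∈ (s.erase j).filter (¬ · < j), (fun t => a (m j) (t + m (j+1))) (m k - m (j+1)) := by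
      refine Finset.sum_congr rfl fun k hk => ?_
      simp [Nat.sub_add_cancel (hge k hk)]
    rw [this]
    refine le_trans (sum_comp_le_tsum (fun t => ha _ _)
      ((summable_nat_add_iff _).2 (hS (m j))) _ ?_) htail2
    intro x hx y hy hxy
    have hxy' : m x - m (j+1) = m y - m (j+1) := hxy
    have hx' := hge x hx; have hy' := hge y hy
    exact hminj (by omega)
  linarith

set_option maxHeartbeats 1000000 in
lemma exists_c0_embedding [CompleteSpace Y] {z : ℕ → Y} {δ B : ℝ} (hδ : 0 < δ)
    (hB0 : 0 ≤ B) (hz : ∀ k, δ ≤ ‖z k‖)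
    (hB : ∀ (y' : Y →L[ℝ] ℝ) (s : Finset ℕ), ∑ k ∈ s, |y' (z k)| ≤ B * ‖y'‖)
    (g : ℕ → Y →L[ℝ] ℝ) (hg1 : ∀ j, ‖g j‖ = 1) (hgz : ∀ j, g j (z j) = ‖z j‖)
    (hsmall : ∀ j (s : Finset ℕ), ∑ k ∈ s.erase j, |g j (z k)| ≤ δ / 2) :
    ∃ e : ZeroAtInftyContinuousMap ℕ ℝ →L[ℝ] Y, ∃ c : ℝ, 0 < c ∧ ∀ x, c * ‖x‖ ≤ ‖e x‖ := by
  classical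
  -- basic norm facts on C₀
  have hcoe : ∀ (a : ZeroAtInftyContinuousMap ℕ ℝ) (k : ℕ), |a k| ≤ ‖a‖ := by
    intro a k
    have := a.toBCF.norm_coe_le_norm k
    rwa [ZeroAtInftyContinuousMap.norm_toBCF_eq_norm] at this
  have hnorm_le : ∀ (a : ZeroAtInftyContinuousMap ℕ ℝ) (C : ℝ), 0 ≤ C →
      (∀ k, |a k| ≤ C) → ‖a‖ ≤ C := by
    intro a C hC h
    rw [← ZeroAtInftyContinuousMap.norm_toBCF_eq_norm]
    exact (BoundedContinuousFunction.norm_le hC).2 h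
  have hzero : ∀ (a : ZeroAtInftyContinuousMap ℕ ℝ) (M : ℝ), 0 < M →
      ∃ s : Finset ℕ, ∀ k ∉ s, |a k| < M := by
    intro a M hM
    have h1 : Tendsto a cofinite (𝓝 0) := by
      have := ZeroAtInftyContinuousMapClass.zero_at_infty (f := a)
      rwa [cocompact_eq_cofinite] at this
    have h2 : ∀ᶠ k in cofinite, |a k| < M := by
      have := Metric.tendsto_nhds.1 h1 M hM
      simpa [Real.dist_eq] using this
    have h3 : {k | ¬ |a k| < M}.Finite := h2
    exact ⟨h3.toFinset, fun k hk => by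
      by_contra hcon
      exact hk (h3.mem_toFinset.2 hcon)⟩
  -- finite-sum bound
  have key : ∀ (w : ℕ → ℝ) (t : Finset ℕ) (M : ℝ), 0 ≤ M → (∀ k ∈ t, |w k| ≤ M) →
      ‖∑ k ∈ t, w k • z k‖ ≤ M * B := by
    intro w t M hM hw
    refine NormedSpace.norm_le_dual_bound ℝ _ (mul_nonneg hM hB0) fun y' => ?_
    have heq : y' (∑ k ∈ t, w k • z k) = ∑ k ∈ t, w k * y' (z k) := by
      simp [map_sum, smul_eq_mul]
    rw [Real.norm_eq_abs, heq]
    calc |∑ k ∈ t, w k * y' (z k)| ≤ ∑ k ∈ t, |w k * y' (z k)| :=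
          Finset.abs_sum_le_sum_abs _ _
      _ ≤ ∑ k ∈ t, M * |y' (z k)| := by
          refine Finset.sum_le_sum fun k hk => ?_
          rw [abs_mul]
          exact mul_le_mul_of_nonneg_right (hw k hk) (abs_nonneg _)
      _ = M * ∑ k ∈ t, |y' (z k)| := by rw [Finset.mul_sum]
      _ ≤ M * (B * ‖y'‖) := mul_le_mul_of_nonneg_left (hB y' t) hM
      _ = M * B * ‖y'‖ := by ring
  -- summability of the series defining the embedding
  have hsumm : ∀ a : ZeroAtInftyContinuousMap ℕ ℝ, Summable (fun k => a k • z k) := by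
    intro a
    rw [summable_iff_vanishing]
    intro e he
    obtain ⟨M, hM, hball⟩ := Metric.mem_nhds_iff.1 he
    obtain ⟨s, hs⟩ := hzero a (M / (B + 1)) (by positivity)
    refine ⟨s, fun t ht => ?_⟩
    apply hball
    rw [Metric.mem_ball, dist_zero_right]
    calc ‖∑ k ∈ t, a k • z k‖ ≤ (M / (B + 1)) * B := by
          refine key a t _ (by positivity) fun k hk => ?_
          exact (hs k (Finset.disjoint_left.1 ht hk)).le
      _ < M := by
          rw [div_mul_eq_mul_div, div_lt_iff₀ (by positivity)]
          nlinarith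
  -- the linear map
  set e₀ : ZeroAtInftyContinuousMap ℕ ℝ →ₗ[ℝ] Y :=
    { toFun := fun a => ∑' k, a k • z k
      map_add' := by
        intro a b
        have : ∀ k, (a + b) k • z k = a k • z k + b k • z k := by
          intro k
          simp [add_smul]
        simp_rw [this]
        exact Summable.tsum_add (hsumm a) (hsumm b)
      map_smul' := by
        intro r a
        have : ∀ k, (r • a) k • z k = r • (a k • z k) := by
          intro k
          simp [smul_smul]
        simp_rw [this]
        exact ((hsumm a).hasSum.const_smul r).tsum_eq } with he₀
  have hbound : ∀ a, ‖e₀ a‖ ≤ B * ‖a‖ := by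
    intro a
    rw [mul_comm]
    refine le_of_tendsto' (hsumm a).hasSum.norm ?_
    intro t
    exact key a t ‖a‖ (norm_nonneg _) fun k _ => hcoe a k
  refine ⟨e₀.mkContinuous B hbound, δ/2, by positivity, fun a => ?_⟩
  have happ : e₀.mkContinuous B hbound a = ∑' k, a k • z k := rfl
  refine le_of_forall_pos_le_add fun θ hθ => ?_
  set M := θ / δ with hMdef
  have hM : 0 < M := by positivity
  by_cases hcase : ‖a‖ < M
  · have h0 : (0:ℝ) ≤ ‖e₀.mkContinuous B hbound a‖ := norm_nonneg _
    calc δ/2 * ‖a‖ ≤ δ/2 * M := by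
          refine mul_le_mul_of_nonneg_left hcase.le (by positivity)
      _ = θ/2 := by rw [hMdef]; field_simp
      _ ≤ ‖e₀.mkContinuous B hbound a‖ + θ := by linarith
  · push_neg at hcase
    -- pick a coordinate with big value
    obtain ⟨j, hj⟩ : ∃ j, ‖a‖ - M < |a j| := by
      by_contra hcon
      push_neg at hcon
      have := hnorm_le a (‖a‖ - M) (by linarith) hcon
      linarith
    -- summability facts
    have hgj : Summable fun k => |g j (z k)| := by
      apply summable_of_sum_range_le (fun k => abs_nonneg _)
      intro n
      calc ∑ k ∈ Finset.range n, |g j (z k)| ≤ B * ‖g j‖ := hB (g j) _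
        _ = B := by rw [hg1 j, mul_one]
    have hasum : Summable fun k => |a k * g j (z k)| := by
      refine Summable.of_nonneg_of_le (fun k => abs_nonneg _) (fun k => ?_) (hgj.mul_left ‖a‖)
      rw [abs_mul]
      exact mul_le_mul_of_nonneg_right (hcoe a k) (abs_nonneg _)
    have hgsum : Summable fun k => a k * g j (z k) := hasum.of_abs
    have heval : g j (e₀.mkContinuous B hbound a) = ∑' k, a k * g j (z k) := by
      rw [happ, ContinuousLinearMap.map_tsum _ (hsumm a)]
      refine tsum_congr fun k => ?_
      simp [smul_eq_mul]
    -- split off the j-th term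
    have hsplit : (∑' k, a k * g j (z k)) =
        a j * g j (z j) + ∑' k, if k = j then 0 else a k * g j (z k) :=
      Summable.tsum_eq_add_tsum_ite hgsum j
    set R := ∑' k, if k = j then 0 else a k * g j (z k) with hR
    -- |R| ≤ ‖a‖ * (δ/2)
    have hVsummable : Summable fun k => if k = j then (0:ℝ) else |g j (z k)| := by
      apply hgj.summable_of_eq_zero_or_self
      intro k
      by_cases h : k = j <;> simp [h]
    have hV : (∑' k, if k = j then (0:ℝ) else |g j (z k)|) ≤ δ/2 := by
      refine Summable.tsum_le_of_sum_le hVsummable fun s => ?_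
      have h1 : ∑ k ∈ s, (if k = j then (0:ℝ) else |g j (z k)|) =
          ∑ k ∈ s.erase j, (if k = j then (0:ℝ) else |g j (z k)|) := by
        by_cases hjs : j ∈ s
        · rw [Finset.sum_erase]
          simp
        · rw [Finset.erase_eq_of_notMem hjs]
      rw [h1]
      calc ∑ k ∈ s.erase j, (if k = j then (0:ℝ) else |g j (z k)|)
          = ∑ k ∈ s.erase j, |g j (z k)| := by
            refine Finset.sum_congr rfl fun k hk => ?_
            rw [if_neg (Finset.ne_of_mem_erase hk)]
        _ ≤ δ/2 := hsmall j s
    have hRbound : |R| ≤ ‖a‖ * (δ/2) := by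
      rw [hR]
      have habs : Summable fun k => |if k = j then (0:ℝ) else a k * g j (z k)| := by
        apply hasum.summable_of_eq_zero_or_self
        intro k
        by_cases h : k = j <;> simp [h]
      calc |∑' k, if k = j then (0:ℝ) else a k * g j (z k)|
          ≤ ∑' k, |if k = j then (0:ℝ) else a k * g j (z k)| := by
            have habs' : Summable fun k => ‖if k = j then (0:ℝ) else a k * g j (z k)‖ := habs
            have := norm_tsum_le_tsum_norm
              (f := fun k => if k = j then (0:ℝ) else a k * g j (z k)) habs'
            simpa [Real.norm_eq_abs] using this
        _ ≤ ∑' k, ‖a‖ * (if k = j then (0:ℝ) else |g j (z k)|) := by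
            refine Summable.tsum_le_tsum (fun k => ?_) habs (hVsummable.mul_left ‖a‖)
            by_cases h : k = j
            · simp [h]
            · rw [if_neg h, if_neg h, abs_mul]
              exact mul_le_mul_of_nonneg_right (hcoe a k) (abs_nonneg _)
        _ = ‖a‖ * ∑' k, (if k = j then (0:ℝ) else |g j (z k)|) := tsum_mul_left
        _ ≤ ‖a‖ * (δ/2) := mul_le_mul_of_nonneg_left hV (norm_nonneg _)
    -- putting everything together
    have hgea : |g j (e₀.mkContinuous B hbound a)| ≤ ‖e₀.mkContinuous B hbound a‖ := by
      calc |g j (e₀.mkContinuous B hbound a)|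
          ≤ ‖g j‖ * ‖e₀.mkContinuous B hbound a‖ := (g j).le_opNorm _
        _ = ‖e₀.mkContinuous B hbound a‖ := by rw [hg1 j, one_mul]
    have hlow : |a j| * ‖z j‖ - |R| ≤ |g j (e₀.mkContinuous B hbound a)| := by
      rw [heval, hsplit, hgz j]
      have h4 : |a j * ‖z j‖| ≤ |a j * ‖z j‖ + R| + |R| := by
        have := abs_add_le (a j * ‖z j‖ + R) (-R)
        simpa using this
      have h5 : |a j * ‖z j‖| = |a j| * ‖z j‖ := by
        rw [abs_mul, abs_of_nonneg (norm_nonneg _)]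
      linarith
    have hzj : |a j| * δ ≤ |a j| * ‖z j‖ :=
      mul_le_mul_of_nonneg_left (hz j) (abs_nonneg _)
    have haj : (‖a‖ - M) * δ ≤ |a j| * δ :=
      mul_le_mul_of_nonneg_right hj.le hδ.le
    have hMδ : M * δ = θ := by
      rw [hMdef]; field_simp
    nlinarith [norm_nonneg a, hgea, hlow, hRbound]

lemma summable_of_weakly_summable [CompleteSpace Y]
    (hY : ¬ ∃ e : ZeroAtInftyContinuousMap ℕ ℝ →L[ℝ] Y, ∃ c : ℝ, 0 < c ∧ ∀ x, c * ‖x‖ ≤ ‖e x‖)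
    {ι : Type*} (x : ι → Y) (hx : ∀ y' : Y →L[ℝ] ℝ, Summable fun i => |y' (x i)|) :
    Summable x := by
  classical
  by_contra hns
  rw [summable_iff_vanishing] at hns
  push_neg at hns
  obtain ⟨e, he, hbad⟩ := hns
  obtain ⟨ε, hε, hball⟩ := Metric.mem_nhds_iff.1 he
  have hbad' : ∀ s : Finset ι, ∃ t : Finset ι, Disjoint t s ∧ ε ≤ ‖∑ i ∈ t, x i‖ := by
    intro s
    obtain ⟨t, ht, hnot⟩ := hbad s
    refine ⟨t, ht, ?_⟩
    by_contra hlt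
    push_neg at hlt
    exact hnot (hball (by rwa [Metric.mem_ball, dist_zero_right]))
  -- disjoint blocks with big sums
  haveI : Std.Symm (α := Finset ι) Disjoint := ⟨fun _ _ h => h.symm⟩
  have hstep : ∀ S : Finset (Finset ι), (∀ t ∈ S, ε ≤ ‖∑ i ∈ t, x i‖) →
      ∃ u : Finset ι, ε ≤ ‖∑ i ∈ u, x i‖ ∧ ∀ t ∈ S, Disjoint t u := by
    intro S _
    obtain ⟨t, ht, hbig⟩ := hbad' (S.sup id)
    refine ⟨t, hbig, fun u hu => ?_⟩
    exact (ht.mono_right (Finset.le_sup (f := id) hu)).symm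
  obtain ⟨T, hTP, hTdisj⟩ := exists_seq_of_forall_finset_exists
    (fun t : Finset ι => ε ≤ ‖∑ i ∈ t, x i‖) Disjoint hstep
  have hTdisj' : ∀ i j, i ≠ j → Disjoint (T i) (T j) := by
    intro i j hij
    rcases lt_or_gt_of_ne hij with h | h
    · exact hTdisj i j h
    · exact (hTdisj j i h).symm
  set y : ℕ → Y := fun j => ∑ i ∈ T j, x i with hy
  have hwuc : ∀ y' : Y →L[ℝ] ℝ, Summable fun j => |y' (y j)| := by
    intro y'
    set gg : ℕ → ℝ := fun j => ∑ i ∈ T j, |y' (x i)| with hgg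
    have hgsum : Summable gg := by
      apply summable_of_sum_range_le (fun j => Finset.sum_nonneg fun i _ => abs_nonneg _)
      intro J
      have : ∑ j ∈ Finset.range J, gg j = ∑ i ∈ (Finset.range J).biUnion T, |y' (x i)| := by
        rw [Finset.sum_biUnion]
        intro p hp q hq hpq
        exact hTdisj' p q hpq
      rw [this]
      exact Summable.sum_le_tsum _ (fun i _ => abs_nonneg _) (hx y')
    refine Summable.of_nonneg_of_le (fun j => abs_nonneg _) (fun j => ?_) hgsum
    calc |y' (y j)| = |∑ i ∈ T j, y' (x i)| := by rw [hy, map_sum]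
      _ ≤ ∑ i ∈ T j, |y' (x i)| := Finset.abs_sum_le_sum_abs _ _
  obtain ⟨B, hB0, hB⟩ := wuc_uniform_bound y hwuc
  have hynorm : ∀ j, ε ≤ ‖y j‖ := fun j => hTP j
  have hyne : ∀ j, y j ≠ 0 := by
    intro j h
    have h2 := hynorm j
    rw [h, norm_zero] at h2
    linarith
  -- norming functionals
  have hfex : ∀ j, ∃ g : Y →L[ℝ] ℝ, ‖g‖ = 1 ∧ g (y j) = ‖y j‖ := by
    intro j
    obtain ⟨g, hg1, hg2⟩ := exists_dual_vector ℝ (y j) (norm_ne_zero_iff.2 (hyne j))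
    exact ⟨g, hg1, by exact_mod_cast hg2⟩
  choose g hg1 hgy using hfex
  -- Rosenthal
  have hrow : ∀ j, ∀ s : Finset ℕ, ∑ k ∈ s, |g j (y k)| ≤ B := by
    intro j s
    calc ∑ k ∈ s, |g j (y k)| ≤ B * ‖g j‖ := hB (g j) s
      _ = B := by rw [hg1 j, mul_one]
  obtain ⟨m, hm, hsmall⟩ := rosenthal_sub (fun j k => abs_nonneg _) hrow
    (by positivity : (0:ℝ) < ε/2)
  -- build the embedding and contradict hY
  apply hY
  refine exists_c0_embedding hε hB0 (z := y ∘ m) (fun k => hynorm (m k)) ?_ (fun j => g (m j))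
    (fun j => hg1 (m j)) (fun j => hgy (m j)) ?_
  · intro y' s
    have : ∑ k ∈ s, |y' ((y ∘ m) k)| = ∑ k ∈ s.image m, |y' (y k)| := by
      rw [Finset.sum_image (fun p hp q hq hpq => hm.injective hpq)]
      rfl
    rw [this]
    exact hB y' _
  · intro j s
    exact hsmall j s

end Auxiliary

section Decomposition

open Filter Topology

lemma hasSum_sum_type {α : Type*} [AddCommMonoid α] [TopologicalSpace α]
    [ContinuousAdd α] {f : ℕ ⊕ ℕ → α} {x y : α}
    (h1 : HasSum (f ∘ Sum.inl) x) (h2 : HasSum (f ∘ Sum.inr) y) : HasSum f (x + y) := by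
  have e1 : HasSum (f ∘ ((↑) : Set.range (Sum.inl : ℕ → ℕ ⊕ ℕ) → ℕ ⊕ ℕ)) x := by
    rw [← (Equiv.ofInjective (Sum.inl : ℕ → ℕ ⊕ ℕ) Sum.inl_injective).hasSum_iff]
    exact h1
  have e2 : HasSum (f ∘ ((↑) : Set.range (Sum.inr : ℕ → ℕ ⊕ ℕ) → ℕ ⊕ ℕ)) y := by
    rw [← (Equiv.ofInjective (Sum.inr : ℕ → ℕ ⊕ ℕ) Sum.inr_injective).hasSum_iff]
    exact h2
  exact e1.add_isCompl Set.isCompl_range_inl_range_inr e2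

lemma exists_indicator_decomposition {Ω : Type*} [MeasurableSpace Ω] {h : Ω → ℝ}
    (hm : Measurable h) (h0 : ∀ ω, 0 ≤ h ω) :
    ∃ (c : ℕ ⊕ ℕ → ℝ) (B : ℕ ⊕ ℕ → Set Ω), (∀ i, 0 ≤ c i) ∧ (∀ i, MeasurableSet (B i)) ∧
      ∀ ω, HasSum (fun i => (B i).indicator (fun _ => c i) ω) (h ω) := by
  classical
  set a : ℕ → Ω → ℕ := fun m ω => ⌊(2:ℝ)^m * h ω⌋₊ with ha
  have hameas : ∀ m, Measurable (a m) :=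
    fun m => Nat.measurable_floor.comp ((measurable_const).mul hm)
  -- floor doubling
  have hdouble : ∀ m ω, a (m+1) ω = 2 * a m ω ∨ a (m+1) ω = 2 * a m ω + 1 := by
    intro m ω
    have hx : (0:ℝ) ≤ (2:ℝ)^m * h ω := mul_nonneg (by positivity) (h0 ω)
    have h1 : (2:ℝ)^(m+1) * h ω = 2 * ((2:ℝ)^m * h ω) := by ring
    set x := (2:ℝ)^m * h ω with hxdef
    have hlow : (↑(2 * ⌊x⌋₊) : ℝ) ≤ 2 * x := by
      push_cast
      have := Nat.floor_le hx
      linarith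
    have hup : 2 * x < ↑(2 * ⌊x⌋₊ + 2) := by
      push_cast
      have := Nat.lt_floor_add_one x
      linarith
    have hl : 2 * ⌊x⌋₊ ≤ ⌊2 * x⌋₊ := Nat.le_floor hlow
    have hu : ⌊2 * x⌋₊ < 2 * ⌊x⌋₊ + 2 := by
      have h2x : (0:ℝ) ≤ 2 * x := by positivity
      by_contra hcon
      push_neg at hcon
      have := Nat.floor_le h2x
      have hc : (↑(2 * ⌊x⌋₊ + 2) : ℝ) ≤ 2 * x :=
        le_trans (by exact_mod_cast Nat.cast_le.2 hcon) this
      linarith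
    have e1 : a (m+1) ω = ⌊2 * x⌋₊ := by
      rw [ha]
      congr 1
      rw [hxdef]
      ring
    have e2 : a m ω = ⌊x⌋₊ := rfl
    omega
  refine ⟨Sum.elim (fun _ => 1) (fun m => (1/2)^(m+1)),
    Sum.elim (fun j => {ω | (j+1 : ℝ) ≤ h ω}) (fun m => {ω | a (m+1) ω = 2 * a m ω + 1}),
    ?_, ?_, ?_⟩
  · rintro (j | m) <;> simp <;> positivity
  · rintro (j | m)
    · exact hm measurableSet_Ici
    · exact measurableSet_eq_fun (hameas (m+1)) ((hameas m).const_mul 2 |>.add_const 1)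
  · intro ω
    have hfloor : HasSum (fun j : ℕ =>
        ({ω' | (j+1 : ℝ) ≤ h ω'}).indicator (fun _ => (1:ℝ)) ω) (⌊h ω⌋₊ : ℝ) := by
      have hz : ∀ j ∉ Finset.range ⌊h ω⌋₊,
          ({ω' | (j+1 : ℝ) ≤ h ω'}).indicator (fun _ => (1:ℝ)) ω = 0 := by
        intro j hj
        rw [Finset.mem_range, not_lt] at hj
        rw [Set.indicator_apply_eq_zero]
        intro hmem
        rw [Set.mem_setOf_eq] at hmem
        have : (j:ℕ) + 1 ≤ ⌊h ω⌋₊ := Nat.le_floor (by exact_mod_cast hmem)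
        omega
      have : HasSum _ _ := hasSum_sum_of_ne_finset_zero hz
      convert this using 1
      rw [Finset.sum_congr rfl (fun j hj => ?_)]
      · rw [Finset.sum_const, Finset.card_range, nsmul_eq_mul, mul_one]
      · rw [Finset.mem_range] at hj
        rw [Set.indicator_apply_eq_self.2]
        intro hmem
        exfalso
        apply hmem
        rw [Set.mem_setOf_eq]
        have h1 : ((j:ℝ) + 1) ≤ (⌊h ω⌋₊ : ℝ) := by exact_mod_cast Nat.succ_le_of_lt hj
        exact le_trans h1 (Nat.floor_le (h0 ω))
    have hfrac : HasSum (fun m : ℕ =>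
        ({ω' | a (m+1) ω' = 2 * a m ω' + 1}).indicator (fun _ => ((1:ℝ)/2)^(m+1)) ω)
        (h ω - ⌊h ω⌋₊) := by
      rw [hasSum_iff_tendsto_nat_of_nonneg]
      swap
      · intro m
        apply Set.indicator_nonneg
        intro _ _
        positivity
      have hpartial : ∀ M : ℕ, ∑ m ∈ Finset.range M,
          ({ω' | a (m+1) ω' = 2 * a m ω' + 1}).indicator (fun _ => ((1:ℝ)/2)^(m+1)) ω
          = (a M ω : ℝ) / 2^M - (a 0 ω : ℝ) := by
        intro M
        induction M with
        | zero => simp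
        | succ M ih =>
          rw [Finset.sum_range_succ, ih]
          have hterm : ({ω' | a (M+1) ω' = 2 * a M ω' + 1}).indicator
              (fun _ => ((1:ℝ)/2)^(M+1)) ω = (a (M+1) ω : ℝ)/2^(M+1) - (a M ω : ℝ)/2^M := by
            rcases hdouble M ω with hc | hc
            · rw [Set.indicator_apply_eq_zero.2 (fun hmem => ?_)]
              · rw [hc]
                push_cast
                ring
              · rw [Set.mem_setOf_eq] at hmem
                omega
            · rw [Set.indicator_of_mem (show ω ∈ {ω' | a (M+1) ω' = 2 * a M ω' + 1} from hc)]
              rw [hc]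
              have h2 : (0:ℝ) < 2^M := by positivity
              have h3 : (0:ℝ) < 2^(M+1) := by positivity
              rw [div_pow, one_pow]
              field_simp
              push_cast
              ring
          rw [hterm]
          ring
      simp_rw [hpartial]
      have ha0 : a 0 ω = ⌊h ω⌋₊ := by rw [ha]; norm_num
      rw [ha0]
      have hconv : Tendsto (fun M : ℕ => (a M ω : ℝ) / 2^M) atTop (𝓝 (h ω)) := by
        have hub : ∀ M : ℕ, h ω - (1/2)^M < (a M ω : ℝ)/2^M := by
          intro M
          have h1 : (2:ℝ)^M * h ω < a M ω + 1 := Nat.lt_floor_add_one _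
          have h2 : (0:ℝ) < 2^M := by positivity
          rw [sub_lt_iff_lt_add, div_add' _ _ _ (ne_of_gt h2)]
          rw [lt_div_iff₀ h2]
          have : ((1:ℝ)/2)^M * 2^M = 1 := by
            rw [← mul_pow]
            norm_num
          nlinarith
        have hlb : ∀ M : ℕ, (a M ω : ℝ)/2^M ≤ h ω := by
          intro M
          have h1 : (a M ω : ℝ) ≤ 2^M * h ω :=
            Nat.floor_le (mul_nonneg (by positivity) (h0 ω))
          have h2 : (0:ℝ) < 2^M := by positivity
          rw [div_le_iff₀ h2]
          linarith
        have hgeo : Tendsto (fun M : ℕ => h ω - ((1:ℝ)/2)^M) atTop (𝓝 (h ω)) := by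
          have := tendsto_pow_atTop_nhds_zero_of_lt_one (by norm_num : (0:ℝ) ≤ 1/2)
            (by norm_num : (1:ℝ)/2 < 1)
          simpa using (tendsto_const_nhds (x := h ω)).sub this
        exact tendsto_of_tendsto_of_tendsto_of_le_of_le hgeo tendsto_const_nhds
          (fun M => (hub M).le) hlb
      simpa using hconv.sub (tendsto_const_nhds (x := (⌊h ω⌋₊ : ℝ)))
    have key : h ω = (⌊h ω⌋₊ : ℝ) + (h ω - ⌊h ω⌋₊) := by ring
    rw [key]
    exact hasSum_sum_type hfloor hfrac

end Decomposition

lemma tsum_lintegral_decomposition {Ω : Type*} [MeasurableSpace Ω] {h : Ω → ℝ}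
    {c : ℕ ⊕ ℕ → ℝ} {B : ℕ ⊕ ℕ → Set Ω} (hc : ∀ i, 0 ≤ c i)
    (hB : ∀ i, MeasurableSet (B i))
    (hsum : ∀ ω, HasSum (fun i => (B i).indicator (fun _ => c i) ω) (h ω))
    (μ : Measure Ω) {E : Set Ω} (hE : MeasurableSet E) :
    ∑' i, ENNReal.ofReal (c i) * μ (E ∩ B i) = ∫⁻ ω in E, ENNReal.ofReal (h ω) ∂μ := by
  have hmeas_i : ∀ i, Measurable fun ω => (E ∩ B i).indicator
      (fun _ => ENNReal.ofReal (c i)) ω :=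
    fun i => measurable_const.indicator (hE.inter (hB i))
  calc ∑' i, ENNReal.ofReal (c i) * μ (E ∩ B i)
      = ∑' i, ∫⁻ ω, (E ∩ B i).indicator (fun _ => ENNReal.ofReal (c i)) ω ∂μ := by
        refine tsum_congr fun i => ?_
        rw [lintegral_indicator_const (hE.inter (hB i))]
    _ = ∫⁻ ω, ∑' i, (E ∩ B i).indicator (fun _ => ENNReal.ofReal (c i)) ω ∂μ :=
        (lintegral_tsum fun i => (hmeas_i i).aemeasurable).symm
    _ = ∫⁻ ω, E.indicator (fun ω' => ENNReal.ofReal (h ω')) ω ∂μ := by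
        refine lintegral_congr fun ω => ?_
        by_cases hω : ω ∈ E
        · rw [Set.indicator_of_mem hω]
          have hterm : ∀ i, (E ∩ B i).indicator (fun _ => ENNReal.ofReal (c i)) ω =
              ENNReal.ofReal ((B i).indicator (fun _ => c i) ω) := by
            intro i
            by_cases hBi : ω ∈ B i
            · rw [Set.indicator_of_mem (Set.mem_inter hω hBi), Set.indicator_of_mem hBi]
            · rw [Set.indicator_of_notMem (fun hmem => hBi hmem.2),
                Set.indicator_of_notMem hBi, ofReal_zero]
          simp_rw [hterm]
          rw [← ENNReal.ofReal_tsum_of_nonneg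
            (fun i => Set.indicator_nonneg (fun _ _ => hc i) _) (hsum ω).summable]
          rw [(hsum ω).tsum_eq]
        · rw [Set.indicator_of_notMem hω]
          refine ENNReal.tsum_eq_zero.2 fun i => ?_
          exact Set.indicator_of_notMem (fun hmem => hω hmem.1) _
    _ = ∫⁻ ω in E, ENNReal.ofReal (h ω) ∂μ := lintegral_indicator hE _

lemma integral_decomposition {Ω : Type*} [MeasurableSpace Ω] {h : Ω → ℝ}
    (hmeas : Measurable h) (h0 : ∀ ω, 0 ≤ h ω)
    {c : ℕ ⊕ ℕ → ℝ} {B : ℕ ⊕ ℕ → Set Ω} (hc : ∀ i, 0 ≤ c i)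
    (hB : ∀ i, MeasurableSet (B i))
    (hsum : ∀ ω, HasSum (fun i => (B i).indicator (fun _ => c i) ω) (h ω))
    (μ : Measure Ω) [IsFiniteMeasure μ] {E : Set Ω} (hE : MeasurableSet E)
    (hfin : ∫⁻ ω in E, ENNReal.ofReal (h ω) ∂μ ≠ ∞) :
    Summable (fun i => c i * (μ (E ∩ B i)).toReal) ∧
    ∑' i, c i * (μ (E ∩ B i)).toReal = ∫ ω in E, h ω ∂μ := by
  have key := tsum_lintegral_decomposition hc hB hsum μ hE
  have hterm : ∀ i, (ENNReal.ofReal (c i) * μ (E ∩ B i)).toReal =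
      c i * (μ (E ∩ B i)).toReal := by
    intro i
    rw [ENNReal.toReal_mul, ENNReal.toReal_ofReal (hc i)]
  have hne : ∀ i, ENNReal.ofReal (c i) * μ (E ∩ B i) ≠ ∞ :=
    fun i => ENNReal.mul_ne_top ENNReal.ofReal_ne_top (measure_ne_top μ _)
  have hsummable : Summable (fun i => c i * (μ (E ∩ B i)).toReal) := by
    have := ENNReal.summable_toReal (key ▸ hfin)
    simpa only [hterm] using this
  refine ⟨hsummable, ?_⟩
  have h1 : ∑' i, c i * (μ (E ∩ B i)).toReal =
      (∑' i, ENNReal.ofReal (c i) * μ (E ∩ B i)).toReal := by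
    rw [ENNReal.tsum_toReal_eq hne]
    exact tsum_congr fun i => (hterm i).symm
  rw [h1, key]
  rw [MeasureTheory.integral_eq_lintegral_of_nonneg_ae
    (Eventually.of_forall h0) (hmeas.aestronglyMeasurable.restrict)]

variable [MeasurableSpace Ω] [NormedAddCommGroup X] [CompleteSpace X]
  [NormedAddCommGroup Y] [NormedSpace ℝ Y] [CompleteSpace Y]

theorem lp_eq_lpw_of_no_c0
    (hY : ¬ ∃ e : ZeroAtInftyContinuousMap ℕ ℝ →L[ℝ] Y, ∃ c : ℝ, 0 < c ∧ ∀ x, c * ‖x‖ ≤ ‖e x‖)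
    (ν : VectorMeasure Ω Y) (p : ℝ) (hp : 1 ≤ p) (f : Ω → X) (hf : MemLpw ν p f) :
    NuIntegrable ν (fun ω => ‖f ω‖ ^ p) := by
  classical
  obtain ⟨hfm, hffin⟩ := hf
  have hp0 : (0:ℝ) ≤ p := le_trans zero_le_one hp
  set h : Ω → ℝ := fun ω => ‖f ω‖ ^ p with hh
  have h0 : ∀ ω, 0 ≤ h ω := fun ω => Real.rpow_nonneg (norm_nonneg _) p
  have hmeas : Measurable h :=
    (Real.continuous_rpow_const hp0).measurable.comp hfm.norm.measurable
  have hofReal : ∀ ω, ENNReal.ofReal (h ω) = (‖f ω‖₊ : ℝ≥0∞) ^ p := by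
    intro ω
    rw [hh]
    rw [← ENNReal.ofReal_rpow_of_nonneg (norm_nonneg _) hp0, ofReal_norm, enorm_eq_nnnorm]
  have hfin : ∀ y' : Y →L[ℝ] ℝ, ∫⁻ ω, ENNReal.ofReal (h ω) ∂ scalarVar ν y' < ∞ := by
    intro y'
    simp_rw [hofReal]
    exact hffin y'
  -- Jordan decomposition bookkeeping
  have htv : ∀ y' : Y →L[ℝ] ℝ, scalarVar ν y' =
      (scalarSigned ν y').toJordanDecomposition.posPart +
      (scalarSigned ν y').toJordanDecomposition.negPart := fun y' => rfl
  have happly : ∀ (y' : Y →L[ℝ] ℝ) (A : Set Ω), MeasurableSet A →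
      y' (ν A) = ((scalarSigned ν y').toJordanDecomposition.posPart A).toReal
        - ((scalarSigned ν y').toJordanDecomposition.negPart A).toReal := by
    intro y' A hA
    have h1 : scalarSigned ν y' A = y' (ν A) := by
      rw [scalarSigned]
      rfl
    have h2 := (scalarSigned ν y').toSignedMeasure_toJordanDecomposition
    rw [← h1]
    conv_lhs => rw [← h2]
    rw [JordanDecomposition.toSignedMeasure, VectorMeasure.sub_apply,
      Measure.toSignedMeasure_apply_measurable hA, Measure.toSignedMeasure_apply_measurable hA]
    rfl
  constructor
  · intro y'
    refine ⟨hmeas.stronglyMeasurable.aestronglyMeasurable, ?_⟩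
    rw [hasFiniteIntegral_iff_ofReal (Eventually.of_forall h0)]
    exact hfin y'
  · intro E hE
    obtain ⟨c, B, hc, hB, hsum⟩ := exists_indicator_decomposition hmeas h0
    set x : ℕ ⊕ ℕ → Y := fun i => c i • ν (E ∩ B i) with hx
    -- weak absolute summability
    have hW : ∀ y' : Y →L[ℝ] ℝ, Summable fun i => |y' (x i)| := by
      intro y'
      set tv := scalarVar ν y' with htvdef
      have hulim : ∑' i, ENNReal.ofReal (c i) * tv (E ∩ B i) ≠ ∞ := by
        rw [tsum_lintegral_decomposition hc hB hsum tv hE]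
        exact ne_of_lt (lt_of_le_of_lt (setLIntegral_le_lintegral E _) (hfin y'))
      have hbound_summable : Summable (fun i => c i * (tv (E ∩ B i)).toReal) := by
        have := ENNReal.summable_toReal hulim
        refine Summable.congr this fun i => ?_
        rw [ENNReal.toReal_mul, ENNReal.toReal_ofReal (hc i)]
      refine Summable.of_nonneg_of_le (fun i => abs_nonneg _) (fun i => ?_) hbound_summable
      have hxy : y' (x i) = c i * y' (ν (E ∩ B i)) := by
        rw [hx]
        simp [smul_eq_mul]
      rw [hxy, abs_mul, abs_of_nonneg (hc i)]
      refine mul_le_mul_of_nonneg_left ?_ (hc i)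
      rw [happly y' _ (hE.inter (hB i))]
      have hto : (tv (E ∩ B i)).toReal =
          ((scalarSigned ν y').toJordanDecomposition.posPart (E ∩ B i)).toReal +
          ((scalarSigned ν y').toJordanDecomposition.negPart (E ∩ B i)).toReal := by
        rw [htvdef, htv y', Measure.add_apply, ENNReal.toReal_add (measure_ne_top _ _) (measure_ne_top _ _)]
      rw [hto]
      refine le_trans (abs_sub _ _) ?_
      simp [abs_of_nonneg ENNReal.toReal_nonneg]
    have hsummx : Summable x := summable_of_weakly_summable hY x hW
    refine ⟨∑' i, x i, fun y' => ?_⟩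
    set μp := (scalarSigned ν y').toJordanDecomposition.posPart with hμp
    set μn := (scalarSigned ν y').toJordanDecomposition.negPart with hμn
    have hfinp : ∫⁻ ω in E, ENNReal.ofReal (h ω) ∂μp ≠ ∞ := by
      have hle : ∫⁻ ω in E, ENNReal.ofReal (h ω) ∂μp ≤
          ∫⁻ ω, ENNReal.ofReal (h ω) ∂(scalarVar ν y') := by
        calc ∫⁻ ω in E, ENNReal.ofReal (h ω) ∂μp ≤ ∫⁻ ω, ENNReal.ofReal (h ω) ∂μp :=
              setLIntegral_le_lintegral E _
          _ ≤ ∫⁻ ω, ENNReal.ofReal (h ω) ∂(scalarVar ν y') := by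
              refine lintegral_mono' ?_ (le_refl _)
              rw [htv y']
              exact Measure.le_add_right (le_refl _)
      exact ne_of_lt (lt_of_le_of_lt hle (hfin y'))
    have hfinn : ∫⁻ ω in E, ENNReal.ofReal (h ω) ∂μn ≠ ∞ := by
      have hle : ∫⁻ ω in E, ENNReal.ofReal (h ω) ∂μn ≤
          ∫⁻ ω, ENNReal.ofReal (h ω) ∂(scalarVar ν y') := by
        calc ∫⁻ ω in E, ENNReal.ofReal (h ω) ∂μn ≤ ∫⁻ ω, ENNReal.ofReal (h ω) ∂μn :=
              setLIntegral_le_lintegral E _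
          _ ≤ ∫⁻ ω, ENNReal.ofReal (h ω) ∂(scalarVar ν y') := by
              refine lintegral_mono' ?_ (le_refl _)
              rw [htv y']
              exact Measure.le_add_left (le_refl _)
      exact ne_of_lt (lt_of_le_of_lt hle (hfin y'))
    obtain ⟨hPsum, hPeq⟩ := integral_decomposition hmeas h0 hc hB hsum μp hE hfinp
    obtain ⟨hNsum, hNeq⟩ := integral_decomposition hmeas h0 hc hB hsum μn hE hfinn
    have hterm : ∀ i, y' (x i) = c i * (μp (E ∩ B i)).toReal - c i * (μn (E ∩ B i)).toReal := by
      intro i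
      have hxy : y' (x i) = c i * y' (ν (E ∩ B i)) := by
        rw [hx]; simp [smul_eq_mul]
      rw [hxy, happly y' _ (hE.inter (hB i))]
      ring
    calc y' (∑' i, x i) = ∑' i, y' (x i) := ContinuousLinearMap.map_tsum y' hsummx
      _ = ∑' i, (c i * (μp (E ∩ B i)).toReal - c i * (μn (E ∩ B i)).toReal) :=
          tsum_congr hterm
      _ = (∑' i, c i * (μp (E ∩ B i)).toReal) - ∑' i, c i * (μn (E ∩ B i)).toReal :=
          Summable.tsum_sub hPsum hNsum
      _ = signedIntegral (scalarSigned ν y') E h := by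
          rw [hPeq, hNeq, signedIntegral]
end

section
/- Let (f_m) be a sequence in L^p(ν, X, Y) and f ∈ L^p_w(ν, X, Y), and define vector measures μ_m(E) = ∫_E ‖f_m‖ᵖ dν. If ‖f_m − f‖_{L^p_w(ν,X,Y)} → 0, then for every E ∈ 𝒜 the sequence (μ_m(E)) is Cauchy in Y, uniformly in E; indeed sup_{E∈𝒜} ‖μ_m(E) − μ_k(E)‖ ≤ sup_{‖y'‖≤1} ∫_Ω |‖f_m‖ᵖ − ‖f_k‖ᵖ| d|y'∘ν| ≤ C(‖f_m − f_k‖_{L^p_w}) → 0. -/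
open MeasureTheory ENNReal

variable {Ω X Y : Type*}

private lemma rpow_sub_rpow_le_aux {p a b : ℝ} (hp : 1 ≤ p) (hb : 0 ≤ b) (hba : b ≤ a) :
    a ^ p - b ^ p ≤ p * a ^ (p - 1) * (a - b) := by
  rcases (hb.trans hba).lt_or_eq with ha | ha
  · have ha' : a ≠ 0 := ne_of_gt ha
    have hdiv : (0:ℝ) ≤ b / a := div_nonneg hb ha.le
    have key : 1 + p * (b / a - 1) ≤ (b / a) ^ p := by
      have h := one_add_mul_self_le_rpow_one_add (by linarith : (-1:ℝ) ≤ b / a - 1) hp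
      have h1 : 1 + (b / a - 1) = b / a := by ring
      rwa [h1] at h
    have h2 : (b / a) ^ p = b ^ p / a ^ p := Real.div_rpow hb ha.le p
    have hap : 0 < a ^ p := Real.rpow_pos_of_pos ha p
    have h3 : a ^ p = a ^ (p - 1) * a := by
      rw [← Real.rpow_add_one ha' (p - 1), sub_add_cancel]
    have key2 : a ^ p * (1 + p * (b / a - 1)) ≤ b ^ p := by
      have h4 := mul_le_mul_of_nonneg_left key hap.le
      rw [h2, mul_div_cancel₀ _ (ne_of_gt hap)] at h4
      exact h4
    have h5 : a ^ p * (b / a) = a ^ (p - 1) * b := by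
      rw [h3]; field_simp
    have key3 : a ^ p + p * (a ^ (p-1) * b) - p * a ^ p ≤ b ^ p := by
      have he : a ^ p * (1 + p * (b / a - 1)) = a ^ p + p * (a ^ p * (b/a)) - p * a ^ p := by
        ring
      rw [he, h5] at key2
      linarith
    have h6 : p * a ^ p = p * (a ^ (p-1) * a) := by rw [← h3]
    nlinarith [key3, h6]
  · have ha0 : a = 0 := ha.symm
    have hb0 : b = 0 := le_antisymm (hba.trans_eq ha0) hb
    simp [ha0, hb0]

private lemma abs_rpow_sub_rpow_le_of_le {p a b : ℝ} (hp : 1 ≤ p) (hb : 0 ≤ b) (hba : b ≤ a) :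
    |a ^ p - b ^ p| ≤ p * (a + b) ^ (p - 1) * |a - b| := by
  have ha : 0 ≤ a := hb.trans hba
  have hbp : b ^ p ≤ a ^ p := Real.rpow_le_rpow hb hba (by linarith)
  rw [abs_of_nonneg (sub_nonneg.2 hbp), abs_of_nonneg (sub_nonneg.2 hba)]
  calc a ^ p - b ^ p ≤ p * a ^ (p-1) * (a - b) := rpow_sub_rpow_le_aux hp hb hba
    _ ≤ p * (a + b) ^ (p-1) * (a - b) := by
        apply mul_le_mul_of_nonneg_right _ (sub_nonneg.2 hba)
        exact mul_le_mul_of_nonneg_left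
          (Real.rpow_le_rpow ha (by linarith) (by linarith)) (by linarith)

private lemma abs_rpow_sub_rpow_le {p a b : ℝ} (hp : 1 ≤ p) (ha : 0 ≤ a) (hb : 0 ≤ b) :
    |a ^ p - b ^ p| ≤ p * (a + b) ^ (p - 1) * |a - b| := by
  rcases le_total b a with hba | hab
  · exact abs_rpow_sub_rpow_le_of_le hp hb hba
  · have h := abs_rpow_sub_rpow_le_of_le hp ha hab
    rw [abs_sub_comm (b ^ p), abs_sub_comm b a, add_comm b a] at h
    exact h

private lemma lp_triangle {α : Type*} [MeasurableSpace α] {μ : Measure α} {p : ℝ} (hp : 1 ≤ p)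
    (w : α → ℝ≥0∞) {u v : α → ℝ≥0∞} (hu : AEMeasurable u μ) (hv : AEMeasurable v μ)
    (hw : ∀ ω, w ω ≤ u ω + v ω) :
    (∫⁻ ω, w ω ^ p ∂μ) ^ (1/p) ≤
      (∫⁻ ω, u ω ^ p ∂μ) ^ (1/p) + (∫⁻ ω, v ω ^ p ∂μ) ^ (1/p) := by
  refine le_trans ?_ (ENNReal.lintegral_Lp_add_le hu hv hp)
  refine ENNReal.rpow_le_rpow ?_ (by positivity)
  exact lintegral_mono fun ω => ENNReal.rpow_le_rpow (hw ω) (by linarith)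

variable [MeasurableSpace Ω] [NormedAddCommGroup X] [CompleteSpace X]
  [NormedAddCommGroup Y] [NormedSpace ℝ Y] [CompleteSpace Y]

theorem indefinite_integrals_uniformly_cauchy (ν : VectorMeasure Ω Y) (p : ℝ) (hp : 1 ≤ p)
    (f : Ω → X) (hf : MemLpw ν p f) (F : ℕ → Ω → X) (hF : ∀ m, MemLpw ν p (F m))
    (hFi : ∀ m, NuIntegrable ν (fun ω => ‖F m ω‖ ^ p))
    (μm : ℕ → Set Ω → Y)
    (hμ : ∀ m, ∀ E : Set Ω, MeasurableSet E → ∀ y' : Y →L[ℝ] ℝ,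
      y' (μm m E) = signedIntegral (scalarSigned ν y') E (fun ω => ‖F m ω‖ ^ p))
    (hconv : Filter.Tendsto (fun m => lpwNorm ν p (fun ω => F m ω - f ω))
      Filter.atTop (nhds 0)) :
    ∀ ε : ℝ, 0 < ε → ∃ N : ℕ, ∀ m ≥ N, ∀ k ≥ N, ∀ E : Set Ω, MeasurableSet E →
      ‖μm m E - μm k E‖ ≤ ε := by
  intro ε hε
  have hp0 : (0:ℝ) < p := lt_of_lt_of_le zero_lt_one hp
  have hp0' : (0:ℝ) ≤ p := hp0.le
  have h1p : (0:ℝ) ≤ p - 1 := by linarith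
  -- measurability
  have hmF : ∀ m, Measurable fun ω => (‖F m ω‖₊ : ℝ≥0∞) := fun m => (hF m).1.enorm
  have hmFf : ∀ m, Measurable fun ω => (‖F m ω - f ω‖₊ : ℝ≥0∞) :=
    fun m => ((hF m).1.sub hf.1).enorm
  have hmFF : ∀ m k, Measurable fun ω => (‖F m ω - F k ω‖₊ : ℝ≥0∞) :=
    fun m k => ((hF m).1.sub (hF k).1).enorm
  -- basic lpw facts
  have hle_lpw : ∀ (h : Ω → X) (y' : Y →L[ℝ] ℝ), ‖y'‖ ≤ 1 →
      (∫⁻ ω, (‖h ω‖₊ : ℝ≥0∞) ^ p ∂ scalarVar ν y') ^ (1/p) ≤ lpwNorm ν p h := by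
    intro h y' hy'
    rw [lpwNorm]
    exact le_iSup₂_of_le y' hy' le_rfl
  have hlpw_tri : ∀ m k, lpwNorm ν p (fun ω => F m ω - F k ω) ≤
      lpwNorm ν p (fun ω => F m ω - f ω) + lpwNorm ν p (fun ω => F k ω - f ω) := by
    intro m k
    rw [lpwNorm]
    refine iSup₂_le fun y' hy' => ?_
    refine le_trans (lp_triangle hp (fun ω => (‖F m ω - F k ω‖₊ : ℝ≥0∞))
      (hmFf m).aemeasurable (hmFf k).aemeasurable (fun ω => ?_)) ?_
    · have h : ‖F m ω - F k ω‖₊ ≤ ‖F m ω - f ω‖₊ + ‖F k ω - f ω‖₊ := by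
        have he : F m ω - F k ω = (F m ω - f ω) - (F k ω - f ω) := by abel
        rw [he]; exact nnnorm_sub_le _ _
      simpa using ENNReal.coe_le_coe.mpr h
    · exact add_le_add (hle_lpw _ y' hy') (hle_lpw _ y' hy')
  have hev : ∀ δ : ℝ≥0∞, 0 < δ → ∃ N, ∀ m ≥ N,
      lpwNorm ν p (fun ω => F m ω - f ω) < δ := by
    intro δ hδ
    exact Filter.eventually_atTop.mp (hconv.eventually (Iio_mem_nhds hδ))
  obtain ⟨N1, hN1⟩ := hev 1 zero_lt_one
  have hgnn : ∀ m (ω : Ω), 0 ≤ ‖F m ω‖ ^ p := fun m ω => Real.rpow_nonneg (norm_nonneg _) p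
  have hvar : ∀ y' : Y →L[ℝ] ℝ, scalarVar ν y' =
      (scalarSigned ν y').toJordanDecomposition.posPart
        + (scalarSigned ν y').toJordanDecomposition.negPart := fun _ => rfl
  -- pointwise bound on functionals applied to the indefinite integrals
  have hplain : ∀ j (y' : Y →L[ℝ] ℝ) (E : Set Ω), MeasurableSet E →
      |y' (μm j E)| ≤ ∫ ω, ‖F j ω‖ ^ p ∂ scalarVar ν y' := by
    intro j y' E hE
    have hI : Integrable (fun ω => ‖F j ω‖ ^ p) (scalarVar ν y') := (hFi j).1 y'
    have hI' := (hvar y') ▸ hI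
    have hIp := hI'.left_of_add_measure
    have hIn := hI'.right_of_add_measure
    have h1 : ∫ ω in E, ‖F j ω‖ ^ p ∂(scalarSigned ν y').toJordanDecomposition.posPart
        ≤ ∫ ω, ‖F j ω‖ ^ p ∂(scalarSigned ν y').toJordanDecomposition.posPart :=
      setIntegral_le_integral hIp (ae_of_all _ (hgnn j))
    have h2 : ∫ ω in E, ‖F j ω‖ ^ p ∂(scalarSigned ν y').toJordanDecomposition.negPart
        ≤ ∫ ω, ‖F j ω‖ ^ p ∂(scalarSigned ν y').toJordanDecomposition.negPart :=
      setIntegral_le_integral hIn (ae_of_all _ (hgnn j))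
    have h1' : 0 ≤ ∫ ω in E, ‖F j ω‖ ^ p ∂(scalarSigned ν y').toJordanDecomposition.posPart :=
      integral_nonneg (fun ω => hgnn j ω)
    have h2' : 0 ≤ ∫ ω in E, ‖F j ω‖ ^ p ∂(scalarSigned ν y').toJordanDecomposition.negPart :=
      integral_nonneg (fun ω => hgnn j ω)
    rw [hμ j E hE y', hvar y', integral_add_measure hIp hIn]
    simp only [signedIntegral]
    rw [abs_le]
    constructor <;> [linarith; linarith]
  -- uniform boundedness of `μm N1` via Banach–Steinhaus
  obtain ⟨M, hM0, hM⟩ : ∃ M : ℝ, 0 ≤ M ∧ ∀ E : Set Ω, MeasurableSet E → ‖μm N1 E‖ ≤ M := by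
    have hpt : ∀ y' : Y →L[ℝ] ℝ, ∃ C, ∀ i : {E : Set Ω // MeasurableSet E},
        ‖NormedSpace.inclusionInDoubleDual ℝ Y (μm N1 i.1) y'‖ ≤ C := by
      intro y'
      refine ⟨∫ ω, ‖F N1 ω‖ ^ p ∂ scalarVar ν y', fun i => ?_⟩
      simpa [NormedSpace.dual_def, Real.norm_eq_abs] using hplain N1 y' i.1 i.2
    obtain ⟨C, hC⟩ := banach_steinhaus hpt
    refine ⟨max C 0, le_max_right _ _, fun E hE => ?_⟩
    refine NormedSpace.norm_le_dual_bound ℝ _ (le_max_right _ _) fun y' => ?_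
    calc ‖y' (μm N1 E)‖
        = ‖NormedSpace.inclusionInDoubleDual ℝ Y (μm N1 E) y'‖ := by
          rw [NormedSpace.dual_def]
      _ ≤ ‖NormedSpace.inclusionInDoubleDual ℝ Y (μm N1 E)‖ * ‖y'‖ :=
          ContinuousLinearMap.le_opNorm _ _
      _ ≤ max C 0 * ‖y'‖ :=
          mul_le_mul_of_nonneg_right ((hC ⟨E, hE⟩).trans (le_max_left _ _)) (norm_nonneg _)
  have hofReal : ∀ (x : X), ENNReal.ofReal (‖x‖ ^ p) = (‖x‖₊ : ℝ≥0∞) ^ p := by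
    intro x
    rw [← ENNReal.ofReal_rpow_of_nonneg (norm_nonneg x) hp0', ofReal_norm, enorm_eq_nnnorm]
  -- the weak L^p norm of F N1 is uniformly bounded
  have hBj : ∀ y' : Y →L[ℝ] ℝ, ‖y'‖ ≤ 1 →
      (∫⁻ ω, (‖F N1 ω‖₊ : ℝ≥0∞) ^ p ∂ scalarVar ν y') ≤ ENNReal.ofReal (2 * M) := by
    intro y' hy'
    have hI : Integrable (fun ω => ‖F N1 ω‖ ^ p) (scalarVar ν y') := (hFi N1).1 y'
    have heq : ENNReal.ofReal (∫ ω, ‖F N1 ω‖ ^ p ∂ scalarVar ν y')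
        = ∫⁻ ω, (‖F N1 ω‖₊ : ℝ≥0∞) ^ p ∂ scalarVar ν y' := by
      rw [ofReal_integral_eq_lintegral_ofReal hI (ae_of_all _ (hgnn N1))]
      exact lintegral_congr fun ω => hofReal (F N1 ω)
    rw [← heq]
    refine ENNReal.ofReal_le_ofReal ?_
    have hI' := (hvar y') ▸ hI
    have hIp := hI'.left_of_add_measure
    have hIn := hI'.right_of_add_measure
    obtain ⟨u, hu, hpu, hnu⟩ := (scalarSigned ν y').toJordanDecomposition.mutuallySingular
    have hrp : ((scalarSigned ν y').toJordanDecomposition.posPart).restrict u = 0 :=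
      Measure.restrict_eq_zero.mpr hpu
    have hrn : ((scalarSigned ν y').toJordanDecomposition.negPart).restrict uᶜ = 0 :=
      Measure.restrict_eq_zero.mpr hnu
    have e1 : ∫ ω, ‖F N1 ω‖ ^ p ∂(scalarSigned ν y').toJordanDecomposition.posPart
        = y' (μm N1 uᶜ) := by
      rw [hμ N1 uᶜ hu.compl y']
      simp only [signedIntegral]
      rw [← integral_add_compl hu hIp, hrp, hrn]
      simp
    have e2 : ∫ ω, ‖F N1 ω‖ ^ p ∂(scalarSigned ν y').toJordanDecomposition.negPart
        = - y' (μm N1 u) := by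
      rw [hμ N1 u hu y']
      simp only [signedIntegral]
      rw [← integral_add_compl hu hIn, hrp, hrn]
      simp
    have b1 : y' (μm N1 uᶜ) ≤ M := by
      calc y' (μm N1 uᶜ) ≤ |y' (μm N1 uᶜ)| := le_abs_self _
        _ ≤ ‖y'‖ * ‖μm N1 uᶜ‖ := by rw [← Real.norm_eq_abs]; exact y'.le_opNorm _
        _ ≤ 1 * M := mul_le_mul hy' (hM _ hu.compl) (norm_nonneg _) zero_le_one
        _ = M := one_mul M
    have b2 : - y' (μm N1 u) ≤ M := by
      calc - y' (μm N1 u) ≤ |y' (μm N1 u)| := neg_le_abs _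
        _ ≤ ‖y'‖ * ‖μm N1 u‖ := by rw [← Real.norm_eq_abs]; exact y'.le_opNorm _
        _ ≤ 1 * M := mul_le_mul hy' (hM _ hu) (norm_nonneg _) zero_le_one
        _ = M := one_mul M
    rw [hvar y', integral_add_measure hIp hIn, e1, e2]
    linarith
  -- the uniform L^p bound D
  have hD2 : ∀ m, N1 ≤ m → lpwNorm ν p (fun ω => F m ω - F N1 ω) ≤ 2 := by
    intro m hm
    refine (hlpw_tri m N1).trans ?_
    calc lpwNorm ν p (fun ω => F m ω - f ω) + lpwNorm ν p (fun ω => F N1 ω - f ω)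
        ≤ 1 + 1 := add_le_add (hN1 m hm).le (hN1 N1 le_rfl).le
      _ = 2 := one_add_one_eq_two
  set D : ℝ≥0∞ := ENNReal.ofReal (2*M) ^ (1/p) + 2 with hD
  have hDne : D ≠ ∞ := by
    rw [hD]
    refine ENNReal.add_ne_top.mpr ⟨?_, ENNReal.ofNat_ne_top⟩
    exact ENNReal.rpow_ne_top_of_nonneg (by positivity) ENNReal.ofReal_ne_top
  have hDm : ∀ m, N1 ≤ m → ∀ y' : Y →L[ℝ] ℝ, ‖y'‖ ≤ 1 →
      (∫⁻ ω, (‖F m ω‖₊ : ℝ≥0∞) ^ p ∂ scalarVar ν y') ^ (1/p) ≤ D := by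
    intro m hm y' hy'
    have tri := lp_triangle hp (fun ω => (‖F m ω‖₊ : ℝ≥0∞))
      (u := fun ω => (‖F N1 ω‖₊ : ℝ≥0∞)) (v := fun ω => (‖F m ω - F N1 ω‖₊ : ℝ≥0∞))
      (hmF N1).aemeasurable (hmFF m N1).aemeasurable (μ := scalarVar ν y') (fun ω => by
        have h : ‖F m ω‖₊ ≤ ‖F N1 ω‖₊ + ‖F m ω - F N1 ω‖₊ := by
          have he : F m ω = F N1 ω + (F m ω - F N1 ω) := by abel
          calc ‖F m ω‖₊ = ‖F N1 ω + (F m ω - F N1 ω)‖₊ := by rw [← he]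
            _ ≤ _ := nnnorm_add_le _ _
        simpa using ENNReal.coe_le_coe.mpr h)
    refine tri.trans ?_
    rw [hD]
    exact add_le_add (ENNReal.rpow_le_rpow (hBj y' hy') (by positivity))
      ((hle_lpw _ y' hy').trans (hD2 m hm))
  -- core estimate
  have hcore : ∀ m, N1 ≤ m → ∀ k, N1 ≤ k → ∀ y' : Y →L[ℝ] ℝ, ‖y'‖ ≤ 1 →
      (∫⁻ ω, ENNReal.ofReal |‖F m ω‖ ^ p - ‖F k ω‖ ^ p| ∂ scalarVar ν y')
        ≤ ENNReal.ofReal p * (2 * D) ^ (p - 1)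
            * lpwNorm ν p (fun ω => F m ω - F k ω) := by
    intro m hm k hk y' hy'
    have hpt : ∀ ω, ENNReal.ofReal |‖F m ω‖ ^ p - ‖F k ω‖ ^ p|
        ≤ ENNReal.ofReal p * (((‖F m ω‖₊ : ℝ≥0∞) + (‖F k ω‖₊ : ℝ≥0∞)) ^ (p - 1)
            * (‖F m ω - F k ω‖₊ : ℝ≥0∞)) := by
      intro ω
      have h1 := abs_rpow_sub_rpow_le hp (norm_nonneg (F m ω)) (norm_nonneg (F k ω))
      have h2 : |‖F m ω‖ - ‖F k ω‖| ≤ ‖F m ω - F k ω‖ := abs_norm_sub_norm_le _ _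
      have h3 : |‖F m ω‖ ^ p - ‖F k ω‖ ^ p|
          ≤ p * ((‖F m ω‖ + ‖F k ω‖) ^ (p-1) * ‖F m ω - F k ω‖) := by
        refine h1.trans ?_
        rw [mul_assoc]
        exact mul_le_mul_of_nonneg_left (mul_le_mul_of_nonneg_left h2 (by positivity)) hp0'
      refine (ENNReal.ofReal_le_ofReal h3).trans (le_of_eq ?_)
      rw [ENNReal.ofReal_mul hp0', ENNReal.ofReal_mul (by positivity)]
      congr 2
      · rw [← ENNReal.ofReal_rpow_of_nonneg (by positivity) h1p,
          ENNReal.ofReal_add (norm_nonneg _) (norm_nonneg _),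
          ofReal_norm, ofReal_norm, enorm_eq_nnnorm, enorm_eq_nnnorm]
      · exact ofReal_norm _
    have hHolder : (∫⁻ ω, ((‖F m ω‖₊ : ℝ≥0∞) + (‖F k ω‖₊ : ℝ≥0∞)) ^ (p - 1)
          * (‖F m ω - F k ω‖₊ : ℝ≥0∞) ∂ scalarVar ν y')
        ≤ (2 * D) ^ (p - 1) * lpwNorm ν p (fun ω => F m ω - F k ω) := by
      rcases eq_or_lt_of_le hp with hp1 | hp1
      · have hp1' : p = 1 := hp1.symm
        subst hp1'
        simp only [sub_self, ENNReal.rpow_zero, one_mul]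
        have h := hle_lpw (fun ω => F m ω - F k ω) y' hy'
        simpa [ENNReal.rpow_one, one_div_one] using h
      · have hpq : p.HolderConjugate (p / (p-1)) := Real.HolderConjugate.conjExponent hp1
        have hq0 : 0 ≤ 1 / (p / (p-1)) := hpq.symm.one_div_nonneg
        have hf1 : AEMeasurable
            (fun ω => ((‖F m ω‖₊ : ℝ≥0∞) + (‖F k ω‖₊ : ℝ≥0∞)) ^ (p-1)) (scalarVar ν y') :=
          (((hmF m).add (hmF k)).pow measurable_const).aemeasurable
        have hg1 : AEMeasurable (fun ω => (‖F m ω - F k ω‖₊ : ℝ≥0∞)) (scalarVar ν y') :=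
          (hmFF m k).aemeasurable
        have hH := ENNReal.lintegral_mul_le_Lp_mul_Lq (scalarVar ν y') hpq.symm hf1 hg1
        simp only [Pi.mul_apply] at hH
        refine hH.trans ?_
        refine mul_le_mul' ?_ (hle_lpw (fun ω => F m ω - F k ω) y' hy')
        have hmink : (∫⁻ ω, ((‖F m ω‖₊ : ℝ≥0∞) + (‖F k ω‖₊ : ℝ≥0∞)) ^ p
            ∂ scalarVar ν y') ^ (1/p) ≤ 2 * D := by
          refine (lp_triangle hp (fun ω => (‖F m ω‖₊ : ℝ≥0∞) + (‖F k ω‖₊ : ℝ≥0∞))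
            (hmF m).aemeasurable (hmF k).aemeasurable (fun ω => le_rfl)).trans ?_
          rw [two_mul]
          exact add_le_add (hDm m hm y' hy') (hDm k hk y' hy')
        have hmink' : (∫⁻ ω, (((‖F m ω‖₊ : ℝ≥0∞) + (‖F k ω‖₊ : ℝ≥0∞)) ^ (p-1)) ^ (p/(p-1))
            ∂ scalarVar ν y') ≤ (2*D) ^ p := by
          have he : ∀ x : ℝ≥0∞, (x ^ (p-1)) ^ (p/(p-1)) = x ^ p := by
            intro x
            rw [← ENNReal.rpow_mul, hpq.sub_one_mul_conj]
          rw [lintegral_congr fun ω => he _]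
          have h := ENNReal.rpow_le_rpow hmink hp0'
          rwa [← ENNReal.rpow_mul, one_div_mul_cancel (ne_of_gt hp0), ENNReal.rpow_one] at h
        calc (∫⁻ ω, (((‖F m ω‖₊ : ℝ≥0∞) + (‖F k ω‖₊ : ℝ≥0∞)) ^ (p-1)) ^ (p/(p-1))
              ∂ scalarVar ν y') ^ (1/(p/(p-1)))
            ≤ ((2*D) ^ p) ^ (1/(p/(p-1))) := ENNReal.rpow_le_rpow hmink' hq0
          _ = (2*D) ^ (p - 1) := by
              rw [← ENNReal.rpow_mul, mul_one_div, hpq.div_conj_eq_sub_one]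
    calc (∫⁻ ω, ENNReal.ofReal |‖F m ω‖ ^ p - ‖F k ω‖ ^ p| ∂ scalarVar ν y')
        ≤ ∫⁻ ω, ENNReal.ofReal p * (((‖F m ω‖₊ : ℝ≥0∞) + (‖F k ω‖₊ : ℝ≥0∞)) ^ (p - 1)
            * (‖F m ω - F k ω‖₊ : ℝ≥0∞)) ∂ scalarVar ν y' := lintegral_mono hpt
      _ = ENNReal.ofReal p * ∫⁻ ω, ((‖F m ω‖₊ : ℝ≥0∞) + (‖F k ω‖₊ : ℝ≥0∞)) ^ (p - 1)
            * (‖F m ω - F k ω‖₊ : ℝ≥0∞) ∂ scalarVar ν y' :=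
          lintegral_const_mul' _ _ ENNReal.ofReal_ne_top
      _ ≤ ENNReal.ofReal p * ((2 * D) ^ (p - 1)
            * lpwNorm ν p (fun ω => F m ω - F k ω)) := mul_le_mul_right hHolder _
      _ = _ := (mul_assoc _ _ _).symm
  -- choose the final index
  set K : ℝ≥0∞ := ENNReal.ofReal p * (2 * D) ^ (p - 1) + 1 with hK
  have hKtop : 2 * K ≠ ∞ := by
    rw [hK]
    refine ENNReal.mul_ne_top ENNReal.ofNat_ne_top (ENNReal.add_ne_top.mpr ⟨?_, ENNReal.one_ne_top⟩)
    exact ENNReal.mul_ne_top ENNReal.ofReal_ne_top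
      (ENNReal.rpow_ne_top_of_nonneg h1p (ENNReal.mul_ne_top ENNReal.ofNat_ne_top hDne))
  set δ : ℝ≥0∞ := ENNReal.ofReal ε / (2 * K) with hδdef
  have hδ0 : 0 < δ := ENNReal.div_pos (ENNReal.ofReal_pos.mpr hε).ne' hKtop
  obtain ⟨N2, hN2⟩ := hev δ hδ0
  refine ⟨max N1 N2, fun m hm k hk E hE => ?_⟩
  have hm1 : N1 ≤ m := le_trans (le_max_left _ _) hm
  have hk1 : N1 ≤ k := le_trans (le_max_left _ _) hk
  have hm2 : N2 ≤ m := le_trans (le_max_right _ _) hm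
  have hk2 : N2 ≤ k := le_trans (le_max_right _ _) hk
  have hT : ∀ z : Y →L[ℝ] ℝ, ‖z‖ ≤ 1 →
      (∫⁻ ω, ENNReal.ofReal |‖F m ω‖ ^ p - ‖F k ω‖ ^ p| ∂ scalarVar ν z)
        ≤ ENNReal.ofReal ε := by
    intro z hz
    refine (hcore m hm1 k hk1 z hz).trans ?_
    have hlpw2 : lpwNorm ν p (fun ω => F m ω - F k ω) ≤ 2 * δ := by
      refine (hlpw_tri m k).trans ?_
      rw [two_mul]
      exact add_le_add (hN2 m hm2).le (hN2 k hk2).le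
    calc ENNReal.ofReal p * (2*D) ^ (p-1) * lpwNorm ν p (fun ω => F m ω - F k ω)
        ≤ K * (2 * δ) := mul_le_mul' (hK ▸ le_self_add) hlpw2
      _ = 2 * K * δ := by ring
      _ ≤ ENNReal.ofReal ε := by rw [hδdef]; exact ENNReal.mul_div_le
  refine NormedSpace.norm_le_dual_bound ℝ _ hε.le fun y' => ?_
  rcases eq_or_ne y' 0 with rfl | hy0
  · simp only [ContinuousLinearMap.zero_apply, norm_zero]
    positivity
  · have hny : ‖y'‖ ≠ 0 := norm_ne_zero_iff.mpr hy0
    set z : Y →L[ℝ] ℝ := ‖y'‖⁻¹ • y' with hzdef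
    have hz1 : ‖z‖ ≤ 1 := by
      exact le_of_eq (norm_smul_inv_norm hy0)
    have hest : |z (μm m E) - z (μm k E)| ≤ ε := by
      have hIm : Integrable (fun ω => ‖F m ω‖ ^ p) (scalarVar ν z) := (hFi m).1 z
      have hIk : Integrable (fun ω => ‖F k ω‖ ^ p) (scalarVar ν z) := (hFi k).1 z
      have hIm' := (hvar z) ▸ hIm
      have hIk' := (hvar z) ▸ hIk
      have hImp := hIm'.left_of_add_measure
      have hImn := hIm'.right_of_add_measure
      have hIkp := hIk'.left_of_add_measure
      have hIkn := hIk'.right_of_add_measure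
      have hφp : Integrable (fun ω => ‖F m ω‖ ^ p - ‖F k ω‖ ^ p)
          (scalarSigned ν z).toJordanDecomposition.posPart := hImp.sub hIkp
      have hφn : Integrable (fun ω => ‖F m ω‖ ^ p - ‖F k ω‖ ^ p)
          (scalarSigned ν z).toJordanDecomposition.negPart := hImn.sub hIkn
      rw [hμ m E hE z, hμ k E hE z]
      simp only [signedIntegral]
      have hs1 : (∫ ω in E, ‖F m ω‖ ^ p ∂(scalarSigned ν z).toJordanDecomposition.posPart
            - ∫ ω in E, ‖F m ω‖ ^ p ∂(scalarSigned ν z).toJordanDecomposition.negPart)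
          - (∫ ω in E, ‖F k ω‖ ^ p ∂(scalarSigned ν z).toJordanDecomposition.posPart
            - ∫ ω in E, ‖F k ω‖ ^ p ∂(scalarSigned ν z).toJordanDecomposition.negPart)
          = (∫ ω in E, (‖F m ω‖ ^ p - ‖F k ω‖ ^ p)
              ∂(scalarSigned ν z).toJordanDecomposition.posPart)
            - (∫ ω in E, (‖F m ω‖ ^ p - ‖F k ω‖ ^ p)
              ∂(scalarSigned ν z).toJordanDecomposition.negPart) := by
        rw [integral_sub hImp.restrict hIkp.restrict, integral_sub hImn.restrict hIkn.restrict]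
        ring
      rw [hs1]
      have hL1e : ∫ ω, |‖F m ω‖ ^ p - ‖F k ω‖ ^ p|
            ∂(scalarSigned ν z).toJordanDecomposition.posPart
          = (∫⁻ ω, ENNReal.ofReal |‖F m ω‖ ^ p - ‖F k ω‖ ^ p|
            ∂(scalarSigned ν z).toJordanDecomposition.posPart).toReal := by
        rw [integral_eq_lintegral_of_nonneg_ae (ae_of_all _ fun ω => abs_nonneg _) hφp.abs.1]
      have hL2e : ∫ ω, |‖F m ω‖ ^ p - ‖F k ω‖ ^ p|
            ∂(scalarSigned ν z).toJordanDecomposition.negPart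
          = (∫⁻ ω, ENNReal.ofReal |‖F m ω‖ ^ p - ‖F k ω‖ ^ p|
            ∂(scalarSigned ν z).toJordanDecomposition.negPart).toReal := by
        rw [integral_eq_lintegral_of_nonneg_ae (ae_of_all _ fun ω => abs_nonneg _) hφn.abs.1]
      have hTz := hT z hz1
      have hsplit : (∫⁻ ω, ENNReal.ofReal |‖F m ω‖ ^ p - ‖F k ω‖ ^ p|
            ∂(scalarSigned ν z).toJordanDecomposition.posPart)
          + (∫⁻ ω, ENNReal.ofReal |‖F m ω‖ ^ p - ‖F k ω‖ ^ p|
            ∂(scalarSigned ν z).toJordanDecomposition.negPart)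
          = ∫⁻ ω, ENNReal.ofReal |‖F m ω‖ ^ p - ‖F k ω‖ ^ p| ∂ scalarVar ν z := by
        rw [hvar z, lintegral_add_measure]
      have hfin : (∫⁻ ω, ENNReal.ofReal |‖F m ω‖ ^ p - ‖F k ω‖ ^ p| ∂ scalarVar ν z) ≠ ∞ :=
        (lt_of_le_of_lt hTz ENNReal.ofReal_lt_top).ne
      have hfin1 : (∫⁻ ω, ENNReal.ofReal |‖F m ω‖ ^ p - ‖F k ω‖ ^ p|
          ∂(scalarSigned ν z).toJordanDecomposition.posPart) ≠ ∞ := by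
        refine ne_top_of_le_ne_top hfin ?_
        rw [← hsplit]; exact le_self_add
      have hfin2 : (∫⁻ ω, ENNReal.ofReal |‖F m ω‖ ^ p - ‖F k ω‖ ^ p|
          ∂(scalarSigned ν z).toJordanDecomposition.negPart) ≠ ∞ := by
        refine ne_top_of_le_ne_top hfin ?_
        rw [← hsplit]; exact le_add_self
      calc |(∫ ω in E, (‖F m ω‖ ^ p - ‖F k ω‖ ^ p)
              ∂(scalarSigned ν z).toJordanDecomposition.posPart)
            - (∫ ω in E, (‖F m ω‖ ^ p - ‖F k ω‖ ^ p)
              ∂(scalarSigned ν z).toJordanDecomposition.negPart)|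
          ≤ |∫ ω in E, (‖F m ω‖ ^ p - ‖F k ω‖ ^ p)
              ∂(scalarSigned ν z).toJordanDecomposition.posPart|
            + |∫ ω in E, (‖F m ω‖ ^ p - ‖F k ω‖ ^ p)
              ∂(scalarSigned ν z).toJordanDecomposition.negPart| := abs_sub _ _
        _ ≤ (∫ ω in E, |‖F m ω‖ ^ p - ‖F k ω‖ ^ p|
              ∂(scalarSigned ν z).toJordanDecomposition.posPart)
            + (∫ ω in E, |‖F m ω‖ ^ p - ‖F k ω‖ ^ p|
              ∂(scalarSigned ν z).toJordanDecomposition.negPart) := by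
            refine add_le_add ?_ ?_
            · simpa [Real.norm_eq_abs] using
                norm_integral_le_integral_norm (μ :=
                  ((scalarSigned ν z).toJordanDecomposition.posPart).restrict E)
                  (fun ω => ‖F m ω‖ ^ p - ‖F k ω‖ ^ p)
            · simpa [Real.norm_eq_abs] using
                norm_integral_le_integral_norm (μ :=
                  ((scalarSigned ν z).toJordanDecomposition.negPart).restrict E)
                  (fun ω => ‖F m ω‖ ^ p - ‖F k ω‖ ^ p)
        _ ≤ (∫ ω, |‖F m ω‖ ^ p - ‖F k ω‖ ^ p|
              ∂(scalarSigned ν z).toJordanDecomposition.posPart)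
            + (∫ ω, |‖F m ω‖ ^ p - ‖F k ω‖ ^ p|
              ∂(scalarSigned ν z).toJordanDecomposition.negPart) :=
            add_le_add
              (setIntegral_le_integral hφp.abs (ae_of_all _ fun ω => abs_nonneg _))
              (setIntegral_le_integral hφn.abs (ae_of_all _ fun ω => abs_nonneg _))
        _ = (∫⁻ ω, ENNReal.ofReal |‖F m ω‖ ^ p - ‖F k ω‖ ^ p|
              ∂(scalarSigned ν z).toJordanDecomposition.posPart).toReal
            + (∫⁻ ω, ENNReal.ofReal |‖F m ω‖ ^ p - ‖F k ω‖ ^ p|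
              ∂(scalarSigned ν z).toJordanDecomposition.negPart).toReal := by
            rw [hL1e, hL2e]
        _ = ((∫⁻ ω, ENNReal.ofReal |‖F m ω‖ ^ p - ‖F k ω‖ ^ p|
              ∂(scalarSigned ν z).toJordanDecomposition.posPart)
            + (∫⁻ ω, ENNReal.ofReal |‖F m ω‖ ^ p - ‖F k ω‖ ^ p|
              ∂(scalarSigned ν z).toJordanDecomposition.negPart)).toReal :=
            (ENNReal.toReal_add hfin1 hfin2).symm
        _ = (∫⁻ ω, ENNReal.ofReal |‖F m ω‖ ^ p - ‖F k ω‖ ^ p| ∂ scalarVar ν z).toReal := by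
            rw [hsplit]
        _ ≤ (ENNReal.ofReal ε).toReal := ENNReal.toReal_mono ENNReal.ofReal_ne_top hTz
        _ = ε := ENNReal.toReal_ofReal hε.le
    have hyz : y' (μm m E - μm k E) = ‖y'‖ * (z (μm m E) - z (μm k E)) := by
      rw [hzdef]
      simp only [map_sub, ContinuousLinearMap.smul_apply, smul_eq_mul]
      field_simp
    rw [hyz, Real.norm_eq_abs, abs_mul, abs_norm]
    calc ‖y'‖ * |z (μm m E) - z (μm k E)| ≤ ‖y'‖ * ε :=
          mul_le_mul_of_nonneg_left hest (norm_nonneg _)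
      _ = ε * ‖y'‖ := mul_comm _ _
end
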